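/- arXiv:2107.01227 — 3 statements merged into one kernel-verified Lean document; each statement's English description precedes it below -/
import Mathlib

section
/- An ultragraph 𝒢 satisfies Condition (Y) if and only if for every infinite path e₁e₂e₃… in 𝒢 and every natural number m ≥ 1 there exist k ∈ ℕ and a finite path α of length k + m with s(e_{k+1}) ∈ r(α), so that α e_{k+1} e_{k+2} … is again an infinite path of 𝒢. -/
/-- An ultragraph: a source map `src : E → V` and a range map assigning to each
edge a nonempty set of vertices. -/
structure Ultragraph (V : Type) (E : Type) : Type where
  src : E → V
  rng : E → Set V
  rng_nonempty : ∀ e, (rng e).Nonempty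

namespace Ultragraph

variable {V E : Type}

/-- A finite path: a (possibly empty) list of edges with compatible transitions. -/
def IsPath (G : Ultragraph V E) (es : List E) : Prop :=
  es.Chain' fun e f => G.src f ∈ G.rng e

/-- An infinite path. -/
def IsInfinitePath (G : Ultragraph V E) (p : ℕ → E) : Prop :=
  ∀ i : ℕ, G.src (p (i + 1)) ∈ G.rng (p i)

/-- Condition (Y). -/
def ConditionY (G : Ultragraph V E) : Prop :=
  ∀ p : ℕ → E, G.IsInfinitePath p →
    ∃ (k : ℕ) (α : List E) (hα : α ≠ []),
      α.length = k + 1 ∧ G.IsPath α ∧ G.src (p k) ∈ G.rng (α.getLast hα)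

/-- The collection 𝒢⁰ of generalized vertices: the smallest collection of subsets of `V`
containing the singletons and the ranges of edges, closed under finite unions and finite
intersections (the empty set is included for convenience; `p_∅ = 0`). -/
inductive InG0 (G : Ultragraph V E) : Set V → Prop
  | vertex (v : V) : InG0 G {v}
  | range (e : E) : InG0 G (G.rng e)
  | union {A B : Set V} : InG0 G A → InG0 G B → InG0 G (A ∪ B)
  | inter {A B : Set V} : InG0 G A → InG0 G B → InG0 G (A ∩ B)

/-- Generators of the Leavitt path algebra. -/
inductive LPAGen (G : Ultragraph V E) : Type
  | edge : E → LPAGen G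
  | star : E → LPAGen G
  | proj : (A : Set V) → G.InG0 A → LPAGen G

/-- The directed graph `E_𝒢` associated to an ultragraph, viewed again as an ultragraph
whose edge ranges are singletons. -/
def toGraph (G : Ultragraph V E) : Ultragraph V {q : E × V // q.2 ∈ G.rng q.1} where
  src q := G.src q.1.1
  rng q := {q.1.2}
  rng_nonempty q := ⟨q.1.2, rfl⟩

variable (R : Type) [CommRing R] (G : Ultragraph V E)

/-- The free `R`-algebra on the generators. -/
abbrev FA := FreeAlgebra R (LPAGen G)

/-- The generator `g` inside the free algebra. -/
def X (g : LPAGen G) : FA R G := FreeAlgebra.ι R g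

/-- The defining relations of the Leavitt path algebra of an ultragraph. -/
inductive LeavittRel : FA R G → FA R G → Prop
  | proj_empty (h : G.InG0 ∅) : LeavittRel (X R G (.proj ∅ h)) 0
  | proj_mul (A B : Set V) (hA : G.InG0 A) (hB : G.InG0 B) :
      LeavittRel (X R G (.proj A hA) * X R G (.proj B hB))
        (X R G (.proj (A ∩ B) (hA.inter hB)))
  | proj_union (A B : Set V) (hA : G.InG0 A) (hB : G.InG0 B) :
      LeavittRel (X R G (.proj (A ∪ B) (hA.union hB)))
        (X R G (.proj A hA) + X R G (.proj B hB) - X R G (.proj (A ∩ B) (hA.inter hB)))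
  | src_mul (e : E) :
      LeavittRel (X R G (.proj {G.src e} (InG0.vertex (G.src e))) * X R G (.edge e))
        (X R G (.edge e))
  | mul_rng (e : E) :
      LeavittRel (X R G (.edge e) * X R G (.proj (G.rng e) (InG0.range e)))
        (X R G (.edge e))
  | rng_mul_star (e : E) :
      LeavittRel (X R G (.proj (G.rng e) (InG0.range e)) * X R G (.star e))
        (X R G (.star e))
  | star_mul_src (e : E) :
      LeavittRel (X R G (.star e) * X R G (.proj {G.src e} (InG0.vertex (G.src e))))
        (X R G (.star e))
  | star_mul_same (e : E) :
      LeavittRel (X R G (.star e) * X R G (.edge e))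
        (X R G (.proj (G.rng e) (InG0.range e)))
  | star_mul_ne (e f : E) (h : e ≠ f) :
      LeavittRel (X R G (.star e) * X R G (.edge f)) 0
  | ck (v : V) (hfin : {e : E | G.src e = v}.Finite) (hne : {e : E | G.src e = v}.Nonempty) :
      LeavittRel (X R G (.proj {v} (InG0.vertex v)))
        (∑ e ∈ hfin.toFinset, X R G (.edge e) * X R G (.star e))

/-- The (unital) quotient of the free algebra by the Leavitt relations; the Leavitt
path algebra `L_R(𝒢)` sits inside it as the non-unital subalgebra generated by the
generators. -/
abbrev LPABig := RingQuot (LeavittRel R G)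

/-- The image of a generator in the quotient. -/
def gen (g : LPAGen G) : LPABig R G := RingQuot.mkAlgHom R (LeavittRel R G) (X R G g)

/-- `s_e`. -/
def sgen (e : E) : LPABig R G := gen R G (.edge e)

/-- `s_e^*`. -/
def tgen (e : E) : LPABig R G := gen R G (.star e)

/-- `p_A`. -/
def pgen (A : Set V) (hA : G.InG0 A) : LPABig R G := gen R G (.proj A hA)

/-- `s_α` for a finite path `α` (the empty product is `1` in the ambient algebra). -/
def sPath (es : List E) : LPABig R G := (es.map (sgen R G)).prod

/-- `s_β^*` for a finite path `β`. -/
def tPath (es : List E) : LPABig R G := (es.reverse.map (tgen R G)).prod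

/-- The monomial `s_α p_A s_β^*`. -/
def mono (α : List E) (A : Set V) (hA : G.InG0 A) (β : List E) : LPABig R G :=
  sPath R G α * pgen R G A hA * tPath R G β

/-- The `m`-th component of the canonical `ℤ`-grading: all finite `R`-linear combinations
of monomials `s_α p_A s_β^*` with `|α| - |β| = m`. -/
def zComp (m : ℤ) : AddSubgroup (LPABig R G) :=
  AddSubgroup.closure {x | ∃ (l : R) (α β : List E) (A : Set V) (hA : G.InG0 A),
    G.IsPath α ∧ G.IsPath β ∧ (α.length : ℤ) - (β.length : ℤ) = m ∧
    x = l • mono R G α A hA β}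

/-- The element of the free group on the edges determined by a finite path. -/
def pathWord (es : List E) : FreeGroup E := (es.map FreeGroup.of).prod

/-- The `g`-th component of the free-group grading: all finite `R`-linear combinations
of monomials `s_α p_A s_β^*` with `α β⁻¹ = g` in the free group on the edges. -/
def fComp (g : FreeGroup E) : AddSubgroup (LPABig R G) :=
  AddSubgroup.closure {x | ∃ (l : R) (α β : List E) (A : Set V) (hA : G.InG0 A),
    G.IsPath α ∧ G.IsPath β ∧ pathWord α * (pathWord β)⁻¹ = g ∧
    x = l • mono R G α A hA β}

/-- The set of generators inside the quotient. -/
def genSet : Set (LPABig R G) := Set.range (gen R G)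

/-- The Leavitt path algebra `L_R(𝒢)`: the non-unital subalgebra of the quotient
generated by the images of the generators. -/
def LPA : NonUnitalSubalgebra R (LPABig R G) := NonUnitalAlgebra.adjoin R (genSet R G)

/-- `s_e` as an element of `L_R(𝒢)`. -/
def sEl (e : E) : LPA R G :=
  ⟨sgen R G e, NonUnitalAlgebra.subset_adjoin R ⟨LPAGen.edge e, rfl⟩⟩

/-- `s_e^*` as an element of `L_R(𝒢)`. -/
def tEl (e : E) : LPA R G :=
  ⟨tgen R G e, NonUnitalAlgebra.subset_adjoin R ⟨LPAGen.star e, rfl⟩⟩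

/-- `p_A` as an element of `L_R(𝒢)`. -/
def pEl (A : Set V) (hA : G.InG0 A) : LPA R G :=
  ⟨pgen R G A hA, NonUnitalAlgebra.subset_adjoin R ⟨LPAGen.proj A hA, rfl⟩⟩

end Ultragraph

/-- The additive span of the set of products `{a b : a ∈ S, b ∈ T}`. -/
def mulSpan {A : Type} [AddGroup A] [Mul A] (S T : AddSubgroup A) : AddSubgroup A :=
  AddSubgroup.closure {x | ∃ a ∈ S, ∃ b ∈ T, x = a * b}

open Ultragraph in
/-- an ultragraph satisfies Condition (Y) iff for every infinite path and
every `m ≥ 1` one can replace an initial segment of length `k` by a path of length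
`k + m` and still obtain an infinite path. -/
theorem conditionY_iff_any_length {V E : Type} [Countable V] [Countable E]
    (G : Ultragraph V E) :
    G.ConditionY ↔
      ∀ p : ℕ → E, G.IsInfinitePath p → ∀ m : ℕ, 1 ≤ m →
        ∃ (k : ℕ) (α : List E) (hα : α ≠ []),
          α.length = k + m ∧ G.IsPath α ∧ G.src (p k) ∈ G.rng (α.getLast hα) := by
  constructor
  · intro hY p hp m hm
    induction m with
    | zero => omega
    | succ m ih =>
      rcases Nat.eq_zero_or_pos m with rfl | hm1
      · simpa using hY p hp
      obtain ⟨k, α, hα, hlen, hpath, hmem⟩ := ih hm1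
      -- define the spliced infinite path q
      set q : ℕ → E := fun i => if h : i < k + m then α[i]'(by omega) else p (i - m) with hq
      have hq_lt : ∀ i (h : i < k + m), q i = α[i]'(by omega) := by
        intro i h; simp only [hq]; rw [dif_pos h]
      have hq_ge : ∀ i, k + m ≤ i → q i = p (i - m) := by
        intro i h; simp only [hq]; rw [dif_neg (by omega)]
      have hchainα := List.isChain_iff_getElem.mp hpath
      have hqinf : G.IsInfinitePath q := by
        intro i
        rcases lt_or_ge (i + 1) (k + m) with h1 | h1
        · rw [hq_lt (i+1) h1, hq_lt i (by omega)]
          exact hchainα i (by omega)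
        rcases eq_or_lt_of_le h1 with h2 | h2
        · rw [hq_ge (i+1) (by omega), hq_lt i (by omega)]
          have h3 : i + 1 - m = k := by omega
          rw [h3]
          have hlast : α.getLast hα = α[i]'(by omega) := by
            rw [List.getLast_eq_getElem]
            congr 1
            omega
          rw [← hlast]; exact hmem
        · rw [hq_ge (i+1) (by omega), hq_ge i (by omega)]
          have h3 : i + 1 - m = (i - m) + 1 := by omega
          rw [h3]
          exact hp (i - m)
      obtain ⟨k', β, hβ, hlenβ, hpathβ, hmemβ⟩ := hY q hqinf
      rcases lt_or_ge k' (k + m) with hk' | hk'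
      · -- extend β by the segment of q from k' to k+m-1
        obtain ⟨t, ht⟩ : ∃ t, k + m - k' = t + 1 := ⟨k + m - k' - 1, by omega⟩
        set tail : List E := (List.range (k + m - k')).map (fun j => q (k' + j)) with htail
        have htail_len : tail.length = k + m - k' := by simp [htail]
        have htail_ne : tail ≠ [] := by
          intro h; rw [← List.length_eq_zero_iff] at h; omega
        have hne : β ++ tail ≠ [] := by simp [hβ]
        refine ⟨k, β ++ tail, hne, ?_, ?_, ?_⟩
        · rw [List.length_append, hlenβ, htail_len]; omega
        · rw [IsPath, List.Chain', List.isChain_append]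
          refine ⟨hpathβ, ?_, ?_⟩
          · rw [htail, List.isChain_iff_getElem]
            intro i hi
            simp only [List.get_eq_getElem, List.getElem_map, List.getElem_range]
            simp only [List.length_map, List.length_range] at hi
            have : k' + (i + 1) = (k' + i) + 1 := by omega
            rw [this]
            exact hqinf (k' + i)
          · intro x hx y hy
            rw [List.getLast?_eq_getLast (l := β) hβ, Option.mem_some_iff] at hx
            have : tail.head? = some (q k') := by
              rw [htail, ht, List.range_succ_eq_map]
              simp
            rw [this, Option.mem_some_iff] at hy
            subst hx; subst hy
            exact hmemβ
        · have hgl : (β ++ tail).getLast hne = q (k + m - 1) := by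
            rw [List.getLast_eq_getElem, List.getElem_append_right
              (by rw [List.length_append, hlenβ, htail_len]; omega)]
            simp only [htail, List.getElem_map, List.getElem_range]
            congr 1
            rw [List.length_append, hlenβ, htail_len]
            omega
          rw [hgl, hq_lt (k + m - 1) (by omega)]
          have hlast : α.getLast hα = α[k + m - 1]'(by omega) := by
            rw [List.getLast_eq_getElem]
            congr 1
            omega
          rw [← hlast]
          exact hmem
      · refine ⟨k' - m, β, hβ, by omega, hpathβ, ?_⟩
        have : q k' = p (k' - m) := hq_ge k' hk'
        rw [← this]
        exact hmemβ
  · intro h p hp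
    obtain ⟨k, α, hα, hlen, hpath, hmem⟩ := h p hp 1 le_rfl
    exact ⟨k, α, hα, hlen, hpath, hmem⟩
end

section
/- Let 𝒢 be an ultragraph such that r(e) is an infinite set for some edge e ∈ 𝒢¹, and let R be a nonzero unital commutative ring. Then L_R(𝒢), with the canonical ℤ-grading {L_R(𝒢)_m}_{m∈ℤ}, is not strongly ℤ-graded. -/
namespace UGProof

open Ultragraph
open scoped Classical

variable {V E : Type} (G : Ultragraph V E)

def Sing (v : V) : Prop :=
  ¬ ({f : E | G.src f = v}.Finite ∧ {f : E | G.src f = v}.Nonempty)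

structure FinPt where
  path : List E
  term : V
  hp : G.IsPath path
  hsing : Sing G term
  hterm : ∀ h : path ≠ [], term ∈ G.rng (path.getLast h)

structure InfPt where
  p : ℕ → E
  hp : G.IsInfinitePath p

lemma InfPt.ext {x y : InfPt G} (h : x.p = y.p) : x = y := by
  cases x; cases y; cases h; rfl

def Pt := FinPt G ⊕ InfPt G

def srcPt : Pt G → V
  | .inl x => match x.path with
    | [] => x.term
    | f :: _ => G.src f
  | .inr x => G.src (x.p 0)

def consPt (e : E) (b : Pt G) (h : srcPt G b ∈ G.rng e) : Pt G :=
  match b, h with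
  | .inl ⟨[], t, hp, hs, ht⟩, h => .inl
      { path := [e], term := t
        hp := List.isChain_singleton e
        hsing := hs
        hterm := fun _ => by simpa [srcPt] using h }
  | .inl ⟨f :: q, t, hp, hs, ht⟩, h => .inl
      { path := e :: f :: q, term := t
        hp := List.isChain_cons_cons.mpr ⟨h, hp⟩
        hsing := hs
        hterm := fun _ => by
          rw [List.getLast_cons (by simp : (f :: q) ≠ [])]
          exact ht (by simp) }
  | .inr x, h => .inr
      { p := fun n => match n with
          | 0 => e
          | n + 1 => x.p n
        hp := fun i => by cases i with
          | zero => exact h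
          | succ n => exact x.hp n }

lemma srcPt_cons (e : E) (b : Pt G) (h : srcPt G b ∈ G.rng e) :
    srcPt G (consPt G e b h) = G.src e := by
  rcases b with ⟨p, t, hp, hs, ht⟩ | x
  · cases p <;> rfl
  · rfl

/-- Decompose a point into first edge and remainder, if possible. -/
def decPt : Pt G → Option (E × Pt G)
  | .inl ⟨[], _, _, _, _⟩ => none
  | .inl ⟨f :: q, t, hp, hs, ht⟩ =>
      some (f, .inl
        { path := q, term := t
          hp := hp.tail
          hsing := hs
          hterm := fun h => by
            have := ht (by simp)
            rwa [List.getLast_cons h] at this })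
  | .inr x => some (x.p 0, .inr ⟨fun n => x.p (n + 1), fun i => x.hp (i + 1)⟩)

lemma dec_cons (e : E) (b : Pt G) (h : srcPt G b ∈ G.rng e) :
    decPt G (consPt G e b h) = some (e, b) := by
  rcases b with ⟨p, t, hp, hs, ht⟩ | x
  · cases p <;> rfl
  · rcases x with ⟨p, hp2⟩
    simp only [consPt, decPt]

lemma src_dec {b b' : Pt G} {f : E} (h : decPt G b = some (f, b')) :
    srcPt G b = G.src f := by
  rcases b with ⟨p, t, hp, hs, ht⟩ | x
  · cases p with
    | nil => simp [decPt] at h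
    | cons g q =>
      simp only [decPt, Option.some.injEq, Prod.mk.injEq] at h
      obtain ⟨rfl, rfl⟩ := h
      rfl
  · simp only [decPt, Option.some.injEq, Prod.mk.injEq] at h
    obtain ⟨rfl, rfl⟩ := h
    rfl

lemma srcmem_dec {b b' : Pt G} {f : E} (h : decPt G b = some (f, b')) :
    srcPt G b' ∈ G.rng f := by
  rcases b with ⟨p, t, hp, hs, ht⟩ | x
  · cases p with
    | nil => simp [decPt] at h
    | cons g q =>
      simp only [decPt, Option.some.injEq, Prod.mk.injEq] at h
      obtain ⟨rfl, rfl⟩ := h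
      cases q with
      | nil =>
        have := ht (by simp)
        simpa [srcPt] using this
      | cons r q' =>
        have := (List.isChain_cons_cons.mp hp).1
        simpa [srcPt] using this
  · simp only [decPt, Option.some.injEq, Prod.mk.injEq] at h
    obtain ⟨rfl, rfl⟩ := h
    simpa [srcPt] using x.hp 0

lemma cons_dec {b b' : Pt G} {f : E} (h : decPt G b = some (f, b'))
    (h' : srcPt G b' ∈ G.rng f) : consPt G f b' h' = b := by
  rcases b with ⟨p, t, hp, hs, ht⟩ | x
  · cases p with
    | nil => simp [decPt] at h
    | cons g q =>
      simp only [decPt, Option.some.injEq, Prod.mk.injEq] at h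
      obtain ⟨rfl, rfl⟩ := h
      cases q <;> rfl
  · simp only [decPt, Option.some.injEq, Prod.mk.injEq] at h
    obtain ⟨rfl, rfl⟩ := h
    simp only [consPt]
    apply congrArg Sum.inr
    apply InfPt.ext
    funext n; cases n <;> rfl

lemma sing_of_dec_none {b : Pt G} (h : decPt G b = none) : Sing G (srcPt G b) := by
  rcases b with ⟨p, t, hp, hs, ht⟩ | x
  · cases p with
    | nil => exact hs
    | cons g q => simp [decPt] at h
  · simp [decPt] at h

variable (R : Type) [CommRing R]

/-- The action of `s_e^*` on a point. -/
noncomputable def starPt (e : E) (b : Pt G) : Pt G →₀ R :=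
  match decPt G b with
  | none => 0
  | some (f, b') => if f = e then Finsupp.single b' 1 else 0

/-- The action of each generator on a point. -/
noncomputable def actGen : LPAGen G → Pt G → (Pt G →₀ R)
  | .proj A _ => fun b => if srcPt G b ∈ A then Finsupp.single b 1 else 0
  | .edge e => fun b =>
      if h : srcPt G b ∈ G.rng e then Finsupp.single (consPt G e b h) 1 else 0
  | .star e => starPt G R e

/-- The linear operator attached to each generator. -/
noncomputable def opGen (g : LPAGen G) : Module.End R (Pt G →₀ R) :=
  Finsupp.lift _ R _ (actGen G R g)

lemma opGen_single (g : LPAGen G) (b : Pt G) :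
    opGen G R g (Finsupp.single b 1) = actGen G R g b := by
  simp [opGen, Finsupp.sum_single_index]

lemma end_ext {φ ψ : Module.End R (Pt G →₀ R)}
    (h : ∀ b, φ (Finsupp.single b 1) = ψ (Finsupp.single b 1)) : φ = ψ := by
  refine Finsupp.lhom_ext' fun b => LinearMap.ext_ring ?_
  simpa using h b

lemma act_proj (A : Set V) (hA : G.InG0 A) (b : Pt G) :
    actGen G R (.proj A hA) b = if srcPt G b ∈ A then Finsupp.single b 1 else 0 := rfl

lemma act_edge (e : E) (b : Pt G) :
    actGen G R (.edge e) b
      = if h : srcPt G b ∈ G.rng e then Finsupp.single (consPt G e b h) 1 else 0 := rfl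

lemma act_star (e : E) (b : Pt G) : actGen G R (.star e) b = starPt G R e b := rfl

lemma starPt_cons (e : E) (b : Pt G) (h : srcPt G b ∈ G.rng e) :
    starPt G R e (consPt G e b h) = Finsupp.single b 1 := by
  simp [starPt, dec_cons]

lemma starPt_cons_ne {e f : E} (hne : f ≠ e) (b : Pt G) (h : srcPt G b ∈ G.rng f) :
    starPt G R e (consPt G f b h) = 0 := by
  simp [starPt, dec_cons, hne]

lemma starPt_none (e : E) {b : Pt G} (hd : decPt G b = none) : starPt G R e b = 0 := by
  simp [starPt, hd]

lemma starPt_some (e : E) {b b' : Pt G} {f : E} (hd : decPt G b = some (f, b')) :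
    starPt G R e b = if f = e then Finsupp.single b' 1 else 0 := by
  simp [starPt, hd]

/-- The representation of the free algebra. -/
noncomputable def fphi : FA R G →ₐ[R] Module.End R (Pt G →₀ R) :=
  FreeAlgebra.lift R (opGen G R)

lemma fphi_X (g : LPAGen G) : fphi G R (X R G g) = opGen G R g :=
  FreeAlgebra.lift_ι_apply _ _

theorem rel_resp ⦃a b : FA R G⦄ (h : LeavittRel R G a b) : fphi G R a = fphi G R b := by
  induction h with
  | proj_empty h =>
    refine end_ext G R fun b => ?_
    simp [fphi_X, opGen_single, act_proj]
  | proj_mul A B hA hB =>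
    refine end_ext G R fun b => ?_
    simp only [map_mul, fphi_X, Module.End.mul_apply, opGen_single, act_proj]
    by_cases hB' : srcPt G b ∈ B <;> by_cases hA' : srcPt G b ∈ A <;>
      simp [hA', hB', opGen_single, act_proj]
  | proj_union A B hA hB =>
    refine end_ext G R fun b => ?_
    simp only [map_add, map_sub, fphi_X, LinearMap.add_apply, LinearMap.sub_apply,
      opGen_single, act_proj]
    by_cases hB' : srcPt G b ∈ B <;> by_cases hA' : srcPt G b ∈ A <;>
      simp [hA', hB']
  | src_mul e =>
    refine end_ext G R fun b => ?_
    simp only [map_mul, fphi_X, Module.End.mul_apply, opGen_single, act_edge]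
    by_cases h : srcPt G b ∈ G.rng e
    · simp [h, opGen_single, act_proj, srcPt_cons]
    · simp [h]
  | mul_rng e =>
    refine end_ext G R fun b => ?_
    simp only [map_mul, fphi_X, Module.End.mul_apply, opGen_single, act_proj, act_edge]
    by_cases h : srcPt G b ∈ G.rng e
    · simp [h, opGen_single, act_edge]
    · simp [h]
  | rng_mul_star e =>
    refine end_ext G R fun b => ?_
    simp only [map_mul, fphi_X, Module.End.mul_apply, opGen_single, act_star]
    rcases hd : decPt G b with _ | ⟨f, b'⟩
    · simp [starPt_none _ _ _ hd]
    · rw [starPt_some G R e hd]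
      by_cases hf : f = e
      · subst hf
        have := srcmem_dec G hd
        simp [opGen_single, act_proj, this]
      · simp [hf]
  | star_mul_src e =>
    refine end_ext G R fun b => ?_
    simp only [map_mul, fphi_X, Module.End.mul_apply, opGen_single, act_proj, act_star]
    by_cases h : srcPt G b ∈ ({G.src e} : Set V)
    · simp [h, opGen_single, act_star]
    · rw [if_neg h, map_zero]
      rcases hd : decPt G b with _ | ⟨f, b'⟩
      · rw [starPt_none _ _ _ hd]
      · rw [starPt_some G R e hd]
        have hsrc := src_dec G hd
        have : f ≠ e := by
          rintro rfl
          exact h (by simp [hsrc])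
        simp [this]
  | star_mul_same e =>
    refine end_ext G R fun b => ?_
    simp only [map_mul, fphi_X, Module.End.mul_apply, opGen_single, act_edge, act_star,
      act_proj]
    by_cases h : srcPt G b ∈ G.rng e
    · simp [h, opGen_single, act_star, starPt_cons]
    · simp [h]
  | star_mul_ne e f hne =>
    refine end_ext G R fun b => ?_
    simp only [map_mul, fphi_X, Module.End.mul_apply, opGen_single, act_edge]
    by_cases h : srcPt G b ∈ G.rng f
    · simp [h, opGen_single, act_star, starPt_cons_ne _ _ (Ne.symm hne)]
    · simp [h]
  | ck v hfin hne =>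
    refine end_ext G R fun b => ?_
    simp only [map_sum, map_mul, fphi_X, LinearMap.sum_apply, Module.End.mul_apply,
      opGen_single, act_proj, act_star]
    rcases hd : decPt G b with _ | ⟨g, b'⟩
    · have hsing := sing_of_dec_none G hd
      have : srcPt G b ≠ v := by
        rintro rfl
        exact hsing ⟨hfin, hne⟩
      simp [this, starPt_none _ _ _ hd]
    · have hsrc := src_dec G hd
      have hmem := srcmem_dec G hd
      have hterm : ∀ f ∈ hfin.toFinset,
          opGen G R (.edge f) (starPt G R f b)
            = if g = f then Finsupp.single b 1 else 0 := by
        intro f _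
        rw [starPt_some G R f hd]
        by_cases hg : g = f
        · subst hg
          simp [opGen_single, act_edge, hmem, cons_dec G hd]
        · simp [hg]
      rw [Finset.sum_congr rfl hterm, Finset.sum_ite_eq]
      simp only [Set.Finite.mem_toFinset, Set.mem_setOf_eq]
      by_cases hv : G.src g = v
      · simp [hv, hsrc, Set.mem_singleton_iff]
      · have : srcPt G b ≠ v := by rw [hsrc]; exact hv
        simp [hv, this]

/-- The representation of the quotient algebra. -/
noncomputable def psi : LPABig R G →ₐ[R] Module.End R (Pt G →₀ R) :=
  RingQuot.liftAlgHom R ⟨fphi G R, rel_resp G R⟩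

lemma psi_gen (g : LPAGen G) : psi G R (gen R G g) = opGen G R g := by
  rw [gen, psi, RingQuot.liftAlgHom_mkAlgHom_apply]
  exact fphi_X G R g

lemma pgen_mul (A B : Set V) (hA : G.InG0 A) (hB : G.InG0 B) :
    pgen R G A hA * pgen R G B hB = pgen R G (A ∩ B) (hA.inter hB) := by
  rw [pgen, pgen, pgen, gen, gen, gen, ← map_mul]
  exact RingQuot.mkAlgHom_rel R (LeavittRel.proj_mul A B hA hB)

lemma pgen_congr {A A' : Set V} (h : A = A') (hA : G.InG0 A) (hA' : G.InG0 A') :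
    pgen R G A hA = pgen R G A' hA' := by subst h; rfl

lemma pgen_empty (h : G.InG0 ∅) : pgen R G ∅ h = 0 := by
  have := RingQuot.mkAlgHom_rel R (LeavittRel.proj_empty (R := R) (G := G) h)
  simpa [pgen, gen] using this

lemma pgen_src_sgen (f : E) :
    pgen R G {G.src f} (InG0.vertex (G.src f)) * sgen R G f = sgen R G f := by
  rw [pgen, sgen, gen, gen, ← map_mul]
  exact RingQuot.mkAlgHom_rel R (LeavittRel.src_mul f)

/-- `p_v`. -/
noncomputable def pv (v : V) : LPABig R G := pgen R G {v} (InG0.vertex v)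

/-- Left multiplication by `p_v` followed by the representation, as an additive map. -/
noncomputable def phiv (v : V) : LPABig R G →+ Module.End R (Pt G →₀ R) :=
  ((psi G R).toLinearMap.toAddMonoidHom).comp (AddMonoidHom.mulLeft (pv G R v))

lemma phiv_apply (v : V) (x : LPABig R G) : phiv G R v x = psi G R (pv G R v * x) := rfl

/-- Elements `x` such that `p_v x` acts as zero for all but finitely many `v`. -/
noncomputable def Q : AddSubgroup (LPABig R G) where
  carrier := {x | {v : V | phiv G R v x ≠ 0}.Finite}
  zero_mem' := by simp
  add_mem' := by
    intro a b ha hb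
    refine (ha.union hb).subset ?_
    intro v hv
    by_contra hcon
    simp only [Set.mem_union, Set.mem_setOf_eq, not_or, not_not] at hcon
    exact hv (by rw [map_add, hcon.1, hcon.2, add_zero])
  neg_mem' := by
    intro a ha
    refine ha.subset ?_
    intro v hv
    simp only [Set.mem_setOf_eq] at hv ⊢
    intro hz
    exact hv (by simp [map_neg, hz])

lemma mulSpan_le : mulSpan (zComp R G 1) (zComp R G (-1)) ≤ Q G R := by
  refine (AddSubgroup.closure_le _).mpr ?_
  rintro x ⟨a, ha, b, hb, rfl⟩
  have key : zComp R G 1 ≤ AddSubgroup.comap (AddMonoidHom.mulRight b) (Q G R) := by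
    refine (AddSubgroup.closure_le _).mpr ?_
    rintro x ⟨l, α, β, A, hA, hα, hβ, hlen, rfl⟩
    obtain ⟨f, α₂, rfl⟩ : ∃ f α₂, α = f :: α₂ := by
      cases α with
      | nil => simp at hlen; omega
      | cons f α₂ => exact ⟨f, α₂, rfl⟩
    show (l • mono R G (f :: α₂) A hA β) * b ∈ Q G R
    refine (Set.finite_singleton (G.src f)).subset ?_
    intro v hv
    simp only [Set.mem_setOf_eq] at hv
    simp only [Set.mem_singleton_iff]
    by_contra hvf
    apply hv
    have hzero : pv G R v * sgen R G f = 0 := by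
      have heq : ({v} : Set V) ∩ {G.src f} = ∅ :=
        Set.singleton_inter_eq_empty.mpr (by simp [hvf])
      have hEmpty : G.InG0 (∅ : Set V) :=
        heq ▸ (InG0.inter (InG0.vertex v) (InG0.vertex (G.src f)))
      rw [← pgen_src_sgen, ← mul_assoc, pv, pgen_mul, pgen_congr G R heq _ hEmpty,
        pgen_empty, zero_mul]
    have hmono : mono R G (f :: α₂) A hA β
        = sgen R G f * (sPath R G α₂ * pgen R G A hA * tPath R G β) := by
      rw [mono, sPath, List.map_cons, List.prod_cons]
      show sgen R G f * sPath R G α₂ * _ * _ = _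
      simp only [mul_assoc]
    have : pv G R v * (l • mono R G (f :: α₂) A hA β * b)
        = l • ((pv G R v * sgen R G f) * ((sPath R G α₂ * pgen R G A hA * tPath R G β) * b)) := by
      rw [hmono]
      simp only [smul_mul_assoc, mul_smul_comm, mul_assoc]
    rw [phiv_apply, this, hzero, zero_mul, smul_zero, map_zero]
  exact key ha

lemma prng_mem (e : E) : pgen R G (G.rng e) (InG0.range e) ∈ zComp R G 0 := by
  apply AddSubgroup.subset_closure
  refine ⟨1, [], [], G.rng e, InG0.range e, List.isChain_nil, List.isChain_nil, by simp, ?_⟩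
  simp [mono, sPath, tPath]

lemma exists_edge_of_not_sing {v : V} (h : ¬ Sing G v) : ∃ f : E, G.src f = v := by
  rw [Sing, not_not] at h
  obtain ⟨f, hf⟩ := h.2
  exact ⟨f, hf⟩

section Seq

variable [Nonempty E]

noncomputable def nxt (v : V) : E × V :=
  if h : ∃ f : E, G.src f = v then (h.choose, (G.rng_nonempty h.choose).choose)
  else (Classical.arbitrary E, v)

noncomputable def vseq (v : V) : ℕ → V
  | 0 => v
  | n + 1 => (nxt G (vseq v n)).2

noncomputable def eseq (v : V) (n : ℕ) : E := (nxt G (vseq G v n)).1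

lemma nxt_spec {v : V} (h : ∃ f : E, G.src f = v) :
    G.src (nxt G v).1 = v ∧ (nxt G v).2 ∈ G.rng (nxt G v).1 := by
  rw [nxt, dif_pos h]
  exact ⟨h.choose_spec, (G.rng_nonempty _).choose_spec⟩

lemma vseq_shift (v : V) (m : ℕ) : vseq G ((nxt G v).2) m = vseq G v (m + 1) := by
  induction m with
  | zero => rfl
  | succ m ih => show (nxt G _).2 = (nxt G _).2; rw [ih]

lemma exists_pt_aux : ∀ n : ℕ, ∀ v : V, Sing G (vseq G v n) →
    (∀ m, m < n → ¬ Sing G (vseq G v m)) → ∃ b : Pt G, srcPt G b = v := by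
  intro n
  induction n with
  | zero =>
    intro v hs _
    exact ⟨.inl ⟨[], v, List.isChain_nil, hs, fun h => absurd rfl h⟩, rfl⟩
  | succ n ih =>
    intro v hs hlt
    have hv0 : ¬ Sing G v := hlt 0 (Nat.succ_pos n)
    have hspec := nxt_spec G (exists_edge_of_not_sing G hv0)
    have hs' : Sing G (vseq G ((nxt G v).2) n) := by rw [vseq_shift]; exact hs
    have hlt' : ∀ m, m < n → ¬ Sing G (vseq G ((nxt G v).2) m) := by
      intro m hm
      rw [vseq_shift]
      exact hlt (m + 1) (Nat.succ_lt_succ hm)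
    obtain ⟨b', hb'⟩ := ih ((nxt G v).2) hs' hlt'
    have h : srcPt G b' ∈ G.rng ((nxt G v).1) := by rw [hb']; exact hspec.2
    exact ⟨consPt G ((nxt G v).1) b' h, by rw [srcPt_cons, hspec.1]⟩

lemma exists_pt' (v : V) : ∃ b : Pt G, srcPt G b = v := by
  by_cases hex : ∃ n, Sing G (vseq G v n)
  · exact exists_pt_aux G (Nat.find hex) v (Nat.find_spec hex)
      (fun m hm => Nat.find_min hex hm)
  · push_neg at hex
    refine ⟨.inr ⟨eseq G v, ?_⟩, ?_⟩
    · intro i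
      have h1 := nxt_spec G (exists_edge_of_not_sing G (hex (i + 1)))
      have h0 := nxt_spec G (exists_edge_of_not_sing G (hex i))
      show G.src (nxt G (vseq G v (i + 1))).1 ∈ G.rng (eseq G v i)
      rw [h1.1]
      exact h0.2
    · show G.src (nxt G (vseq G v 0)).1 = v
      rw [(nxt_spec G (exists_edge_of_not_sing G (hex 0))).1]
      rfl

end Seq

lemma exists_pt (v : V) : ∃ b : Pt G, srcPt G b = v := by
  by_cases hs : Sing G v
  · exact ⟨.inl ⟨[], v, List.isChain_nil, hs, fun h => absurd rfl h⟩, rfl⟩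
  · haveI : Nonempty E := ⟨(exists_edge_of_not_sing G hs).choose⟩
    exact exists_pt' G v

end UGProof


open Ultragraph in
/-- if some edge has infinite range then `L_R(𝒢)` is not strongly
`ℤ`-graded with respect to the canonical grading. -/
theorem not_stronglyZGraded_of_infinite_range {V E : Type} [Countable V] [Countable E]
    (G : Ultragraph V E) (e : E) (he : (G.rng e).Infinite)
    (R : Type) [CommRing R] [Nontrivial R] :
    ¬ (∀ m n : ℤ, mulSpan (zComp R G m) (zComp R G n) = zComp R G (m + n)) := by
  classical
  intro hstrong
  haveI : Nonempty E := ⟨e⟩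
  have h0 : mulSpan (zComp R G 1) (zComp R G (-1)) = zComp R G 0 := by
    have := hstrong 1 (-1)
    rwa [show (1 : ℤ) + -1 = 0 by norm_num] at this
  have hmem : pgen R G (G.rng e) (InG0.range e)
      ∈ mulSpan (zComp R G 1) (zComp R G (-1)) := by
    rw [h0]; exact UGProof.prng_mem G R e
  have hQ : {v : V | UGProof.phiv G R v (pgen R G (G.rng e) (InG0.range e)) ≠ 0}.Finite :=
    UGProof.mulSpan_le G R hmem
  apply he
  refine hQ.subset ?_
  intro v hv
  simp only [Set.mem_setOf_eq]
  have heq : ({v} : Set V) ∩ G.rng e = {v} := by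
    rw [Set.inter_eq_left]
    simpa using hv
  rw [UGProof.phiv_apply, UGProof.pv, UGProof.pgen_mul,
    UGProof.pgen_congr G R heq _ (InG0.vertex v)]
  rw [show pgen R G {v} (InG0.vertex v) = gen R G (.proj {v} (InG0.vertex v)) from rfl,
    UGProof.psi_gen]
  intro hzero
  obtain ⟨b, hb⟩ := UGProof.exists_pt G v
  have hz := congrArg (fun φ : Module.End R ((UGProof.Pt G) →₀ R) =>
    φ (Finsupp.single b (1 : R))) hzero
  simp only [LinearMap.zero_apply] at hz
  rw [UGProof.opGen_single, UGProof.act_proj, if_pos (by simp [hb])] at hz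
  exact one_ne_zero (Finsupp.single_eq_zero.mp hz)
end

section
/- Let 𝒢 be an ultragraph such that r(e) is finite for each edge e, let R be a unital commutative ring, and let E_𝒢 be the directed graph associated to 𝒢. Then there exists an R-algebra isomorphism π : L_R(𝒢) → L_R(E_𝒢) satisfying π(p_A) = Σ_{v∈A} p_v for each A ∈ 𝒢⁰, π(s_e) = Σ_{u∈r(e)} s_{e_u} and π(s_e*) = Σ_{u∈r(e)} s_{e_u}* for each e ∈ 𝒢¹, and π is ℤ-graded: π(L_R(𝒢)_m) = L_R(E_𝒢)_m for every m ∈ ℤ. -/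
namespace Ultragraph

variable {V E : Type} (R : Type) [CommRing R] (G : Ultragraph V E)

lemma rel_eq {a b : FA R G} (h : LeavittRel R G a b) :
    RingQuot.mkAlgHom R (LeavittRel R G) a = RingQuot.mkAlgHom R (LeavittRel R G) b :=
  RingQuot.mkAlgHom_rel R h

lemma pgen_congr {A B : Set V} (hA : G.InG0 A) (hB : G.InG0 B) (h : A = B) :
    pgen R G A hA = pgen R G B hB := by subst h; rfl

lemma pgen_empty (h : G.InG0 ∅) : pgen R G ∅ h = 0 := by
  have := rel_eq R G (LeavittRel.proj_empty h)
  simpa [pgen, gen] using this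

lemma pgen_mul (A B : Set V) (hA : G.InG0 A) (hB : G.InG0 B) :
    pgen R G A hA * pgen R G B hB = pgen R G (A ∩ B) (hA.inter hB) := by
  have := rel_eq R G (LeavittRel.proj_mul A B hA hB)
  simpa [pgen, gen, map_mul] using this

lemma pgen_union (A B : Set V) (hA : G.InG0 A) (hB : G.InG0 B) :
    pgen R G (A ∪ B) (hA.union hB) =
      pgen R G A hA + pgen R G B hB - pgen R G (A ∩ B) (hA.inter hB) := by
  have := rel_eq R G (LeavittRel.proj_union A B hA hB)
  simpa [pgen, gen, map_add, map_sub] using this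

lemma src_sgen (e : E) :
    pgen R G {G.src e} (InG0.vertex (G.src e)) * sgen R G e = sgen R G e := by
  have := rel_eq R G (LeavittRel.src_mul e)
  simpa [pgen, sgen, gen, map_mul] using this

lemma sgen_rng (e : E) :
    sgen R G e * pgen R G (G.rng e) (InG0.range e) = sgen R G e := by
  have := rel_eq R G (LeavittRel.mul_rng e)
  simpa [pgen, sgen, gen, map_mul] using this

lemma rng_tgen (e : E) :
    pgen R G (G.rng e) (InG0.range e) * tgen R G e = tgen R G e := by
  have := rel_eq R G (LeavittRel.rng_mul_star e)
  simpa [pgen, tgen, gen, map_mul] using this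

lemma tgen_src (e : E) :
    tgen R G e * pgen R G {G.src e} (InG0.vertex (G.src e)) = tgen R G e := by
  have := rel_eq R G (LeavittRel.star_mul_src e)
  simpa [pgen, tgen, gen, map_mul] using this

lemma tgen_sgen_same (e : E) :
    tgen R G e * sgen R G e = pgen R G (G.rng e) (InG0.range e) := by
  have := rel_eq R G (LeavittRel.star_mul_same e)
  simpa [pgen, sgen, tgen, gen, map_mul] using this

lemma tgen_sgen_ne (e f : E) (h : e ≠ f) : tgen R G e * sgen R G f = 0 := by
  have := rel_eq R G (LeavittRel.star_mul_ne e f h)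
  simpa [sgen, tgen, gen, map_mul] using this

lemma ck_rel (v : V) (hfin : {e : E | G.src e = v}.Finite)
    (hne : {e : E | G.src e = v}.Nonempty) :
    pgen R G {v} (InG0.vertex v) =
      ∑ e ∈ hfin.toFinset, sgen R G e * tgen R G e := by
  have := rel_eq R G (LeavittRel.ck v hfin hne)
  simpa [pgen, sgen, tgen, gen, map_sum, map_mul] using this

end Ultragraph
namespace Ultragraph

variable {V E : Type} (R : Type) [CommRing R] (G : Ultragraph V E)

lemma pgen_of_empty {A : Set V} (hA : G.InG0 A) (h : A = ∅) : pgen R G A hA = 0 :=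
  (pgen_congr R G hA (h ▸ hA) h).trans (pgen_empty R G _)

lemma pgen_mul_sgen_mem (A : Set V) (hA : G.InG0 A) (e : E) (h : G.src e ∈ A) :
    pgen R G A hA * sgen R G e = sgen R G e := by
  conv_lhs => rw [← src_sgen R G e, ← mul_assoc, pgen_mul]
  rw [pgen_congr R G (hA.inter (InG0.vertex (G.src e))) (InG0.vertex (G.src e))
    (Set.inter_eq_right.mpr (Set.singleton_subset_iff.mpr h)), src_sgen]

lemma pgen_mul_sgen_not (A : Set V) (hA : G.InG0 A) (e : E) (h : G.src e ∉ A) :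
    pgen R G A hA * sgen R G e = 0 := by
  conv_lhs => rw [← src_sgen R G e, ← mul_assoc, pgen_mul]
  rw [pgen_of_empty R G (hA.inter (InG0.vertex (G.src e)))
    (by ext x; simp only [Set.mem_inter_iff, Set.mem_singleton_iff,
        Set.mem_empty_iff_false, iff_false, not_and]; rintro hx rfl; exact h hx), zero_mul]

lemma tgen_mul_pgen_mem (e : E) (A : Set V) (hA : G.InG0 A) (h : G.src e ∈ A) :
    tgen R G e * pgen R G A hA = tgen R G e := by
  conv_lhs => rw [← tgen_src R G e, mul_assoc, pgen_mul]
  rw [pgen_congr R G ((InG0.vertex (G.src e)).inter hA) (InG0.vertex (G.src e))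
    (Set.inter_eq_left.mpr (Set.singleton_subset_iff.mpr h)), tgen_src]

lemma tgen_mul_pgen_not (e : E) (A : Set V) (hA : G.InG0 A) (h : G.src e ∉ A) :
    tgen R G e * pgen R G A hA = 0 := by
  conv_lhs => rw [← tgen_src R G e, mul_assoc, pgen_mul]
  rw [pgen_of_empty R G ((InG0.vertex (G.src e)).inter hA)
    (by ext x; simp only [Set.mem_inter_iff, Set.mem_singleton_iff,
        Set.mem_empty_iff_false, iff_false, not_and]; rintro rfl; exact h), mul_zero]

lemma sgen_mul_pgen (e : E) (A : Set V) (hA : G.InG0 A) :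
    sgen R G e * pgen R G A hA =
      sgen R G e * pgen R G (G.rng e ∩ A) ((InG0.range e).inter hA) := by
  conv_lhs => rw [← sgen_rng R G e, mul_assoc, pgen_mul]

lemma pgen_mul_tgen (A : Set V) (hA : G.InG0 A) (e : E) :
    pgen R G A hA * tgen R G e =
      pgen R G (A ∩ G.rng e) (hA.inter (InG0.range e)) * tgen R G e := by
  conv_lhs => rw [← rng_tgen R G e, ← mul_assoc, pgen_mul]

lemma sgen_mul_sgen (e f : E) (h : G.src f ∉ G.rng e) :
    sgen R G e * sgen R G f = 0 := by
  rw [← src_sgen R G f, ← mul_assoc, sgen_mul_pgen,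
    pgen_of_empty R G _ (by ext x; simp only [Set.mem_inter_iff, Set.mem_singleton_iff,
        Set.mem_empty_iff_false, iff_false, not_and]; rintro hx rfl; exact h hx),
    mul_zero, zero_mul]

lemma tgen_mul_tgen (e f : E) (h : G.src e ∉ G.rng f) :
    tgen R G e * tgen R G f = 0 := by
  rw [← rng_tgen R G f, ← mul_assoc, tgen_mul_pgen_not R G e (G.rng f) (InG0.range f) h,
    zero_mul]

lemma inG0_finset_nonempty (t : Finset V) (ht : t.Nonempty) : G.InG0 ↑t := by
  classical
  induction t using Finset.induction with
  | empty => exact absurd ht (by simp)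
  | @insert c t hc iht =>
    by_cases htne : t.Nonempty
    · have hcoe : (↑(insert c t) : Set V) = {c} ∪ ↑t := by simp
      rw [hcoe]; exact (InG0.vertex c).union (iht htne)
    · have : t = ∅ := Finset.not_nonempty_iff_eq_empty.mp htne
      subst this
      have hcoe : (↑(insert c (∅ : Finset V)) : Set V) = {c} := by simp
      rw [hcoe]; exact InG0.vertex c

lemma sum_singletons_finset (s : Finset V) (hs : G.InG0 ↑s) :
    pgen R G ↑s hs = ∑ v ∈ s, pgen R G {v} (InG0.vertex v) := by
  classical
  induction s using Finset.induction with
  | empty => exact pgen_of_empty R G _ (by simp)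
  | @insert a s ha ih =>
    by_cases hne : s.Nonempty
    · have hsu : G.InG0 ↑s := inG0_finset_nonempty G s hne
      have hcoe : (↑(insert a s) : Set V) = {a} ∪ ↑s := by simp
      rw [pgen_congr R G hs ((InG0.vertex a).union hsu) hcoe, pgen_union R G {a} ↑s (InG0.vertex a) hsu,
        pgen_of_empty R G ((InG0.vertex a).inter hsu)
          (by ext x; simp only [Set.mem_inter_iff, Set.mem_singleton_iff,
              Finset.coe_sort_coe, Set.mem_empty_iff_false, iff_false, not_and,
              Finset.mem_coe]; rintro rfl; exact ha),
        sub_zero, ih hsu, Finset.sum_insert ha]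
    · have : s = ∅ := Finset.not_nonempty_iff_eq_empty.mp hne
      subst this
      rw [Finset.sum_insert (by simp), Finset.sum_empty, add_zero]
      exact pgen_congr R G _ _ (by simp)

lemma sum_singletons {A : Set V} (hA : G.InG0 A) (hAf : A.Finite) :
    pgen R G A hA = ∑ v ∈ hAf.toFinset, pgen R G {v} (InG0.vertex v) := by
  rw [pgen_congr R G hA (show G.InG0 ↑hAf.toFinset by rw [Set.Finite.coe_toFinset]; exact hA)
    (by rw [Set.Finite.coe_toFinset])]
  exact sum_singletons_finset R G _ _

end Ultragraph
namespace Ultragraph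

variable {V E : Type} (R : Type) [CommRing R] (G : Ultragraph V E)

lemma inG0_finite (hfin : ∀ e : E, (G.rng e).Finite) {A : Set V} (hA : G.InG0 A) :
    A.Finite := by
  induction hA with
  | vertex v => exact Set.finite_singleton v
  | range e => exact hfin e
  | union _ _ ih1 ih2 => exact ih1.union ih2
  | inter _ _ ih1 _ => exact ih1.inter_of_left _

/-- sum of vertex projections over a finset -/
noncomputable def pS (s : Finset V) : LPABig R G :=
  ∑ v ∈ s, pgen R G {v} (InG0.vertex v)

lemma pS_eq_pgen (s : Finset V) (hs : G.InG0 ↑s) : pS R G s = pgen R G ↑s hs :=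
  (sum_singletons_finset R G s hs).symm

lemma pS_empty : pS R G ∅ = 0 := Finset.sum_empty

lemma pS_singleton (v : V) : pS R G {v} = pgen R G {v} (InG0.vertex v) :=
  Finset.sum_singleton _ _

lemma pgen_vertex_mul_pgen_vertex [DecidableEq V] (v w : V) :
    pgen R G {v} (InG0.vertex v) * pgen R G {w} (InG0.vertex w) =
      if v = w then pgen R G {w} (InG0.vertex w) else 0 := by
  rw [pgen_mul]
  by_cases h : v = w
  · subst h
    rw [if_pos rfl]
    exact pgen_congr R G _ _ (by simp)
  · rw [if_neg h]
    apply pgen_of_empty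
    ext x
    simp only [Set.mem_inter_iff, Set.mem_singleton_iff, Set.mem_empty_iff_false,
      iff_false, not_and]
    rintro rfl
    exact h

lemma pS_mul [DecidableEq V] (s t : Finset V) : pS R G s * pS R G t = pS R G (s ∩ t) := by
  calc pS R G s * pS R G t
      = ∑ v ∈ s, ∑ w ∈ t, (if v = w then pgen R G {w} (InG0.vertex w) else 0) := by
        rw [pS, pS, Finset.sum_mul_sum]
        exact Finset.sum_congr rfl fun v _ => Finset.sum_congr rfl fun w _ =>
          pgen_vertex_mul_pgen_vertex R G v w
    _ = ∑ v ∈ s, (if v ∈ t then pgen R G {v} (InG0.vertex v) else 0) :=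
        Finset.sum_congr rfl fun v _ => Finset.sum_ite_eq t v _
    _ = pS R G (s ∩ t) := by rw [pS, ← Finset.sum_ite_mem]

lemma pS_union [DecidableEq V] (s t : Finset V) :
    pS R G (s ∪ t) = pS R G s + pS R G t - pS R G (s ∩ t) := by
  have := Finset.sum_union_inter (s₁ := s) (s₂ := t)
    (f := fun v => pgen R G {v} (InG0.vertex v))
  rw [pS, pS, pS, pS, ← this]
  exact (add_sub_cancel_right _ _).symm

end Ultragraph
namespace Ultragraph

variable {V E : Type} (R : Type) [CommRing R] (G : Ultragraph V E)

lemma sgen_mul_tgen_disj (e f : E) (h : G.rng e ∩ G.rng f = ∅) :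
    sgen R G e * tgen R G f = 0 := by
  rw [← sgen_rng R G e, mul_assoc, pgen_mul_tgen, pgen_of_empty R G _ h, zero_mul, mul_zero]

/-- Edges of the associated directed graph. -/
abbrev GEdge := {q : E × V // q.2 ∈ G.rng q.1}

lemma sgenH_mul_pv [DecidableEq V] (q : GEdge G) (v : V) :
    sgen R G.toGraph q * pgen R G.toGraph {v} (InG0.vertex v) =
      if q.1.2 = v then sgen R G.toGraph q else 0 := by
  rw [sgen_mul_pgen]
  by_cases h : q.1.2 = v
  · have he : G.toGraph.rng q ∩ {v} = G.toGraph.rng q := by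
      rw [← h]; exact Set.inter_self _
    rw [if_pos h, pgen_congr R G.toGraph _ (InG0.range q) he, sgen_rng]
  · have he : G.toGraph.rng q ∩ {v} = ∅ :=
      Set.eq_empty_iff_forall_notMem.mpr
        (fun x hx => h (((show x = q.1.2 from hx.1).symm).trans hx.2))
    rw [if_neg h, pgen_of_empty R G.toGraph _ he, mul_zero]

lemma pv_mul_tgenH [DecidableEq V] (v : V) (q : GEdge G) :
    pgen R G.toGraph {v} (InG0.vertex v) * tgen R G.toGraph q =
      if v = q.1.2 then tgen R G.toGraph q else 0 := by
  rw [pgen_mul_tgen]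
  by_cases h : v = q.1.2
  · have he : {v} ∩ G.toGraph.rng q = G.toGraph.rng q := by
      rw [h]; exact Set.inter_self _
    rw [if_pos h, pgen_congr R G.toGraph _ (InG0.range q) he, rng_tgen]
  · have he : {v} ∩ G.toGraph.rng q = ∅ :=
      Set.eq_empty_iff_forall_notMem.mpr
        (fun x hx => h ((show x = v from hx.1).symm.trans (show x = q.1.2 from hx.2)))
    rw [if_neg h, pgen_of_empty R G.toGraph _ he, zero_mul]

lemma srcSet_toGraph_finite (hfin : ∀ e : E, (G.rng e).Finite) (v : V)
    (hS : {e : E | G.src e = v}.Finite) :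
    {q : GEdge G | G.toGraph.src q = v}.Finite := by
  classical
  apply Set.Finite.subset (Finset.finite_toSet
    ((hS.toFinset.sigma fun e => (hfin e).toFinset.attach).image
      (fun (x : (e : E) × {u : V // u ∈ (hfin e).toFinset}) =>
        (⟨(x.1, x.2.1), (Set.Finite.mem_toFinset _).mp x.2.2⟩ : GEdge G))))
  rintro ⟨⟨e, u⟩, hu⟩ hq
  simp only [Finset.coe_image, Set.mem_image, Finset.mem_coe]
  exact ⟨⟨e, ⟨u, (hfin e).mem_toFinset.mpr hu⟩⟩,
    Finset.mem_sigma.mpr ⟨hS.mem_toFinset.mpr hq, Finset.mem_attach _ _⟩, rfl⟩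

lemma srcSet_of_toGraph_finite (v : V)
    (hQ : {q : GEdge G | G.toGraph.src q = v}.Finite) :
    {e : E | G.src e = v}.Finite := by
  apply (hQ.image (fun q => q.1.1)).subset
  intro e he
  obtain ⟨u, hu⟩ := G.rng_nonempty e
  exact ⟨⟨(e, u), hu⟩, he, rfl⟩

lemma srcSet_toGraph_nonempty (v : V) (hS : {e : E | G.src e = v}.Nonempty) :
    {q : GEdge G | G.toGraph.src q = v}.Nonempty := by
  obtain ⟨e, he⟩ := hS
  obtain ⟨u, hu⟩ := G.rng_nonempty e
  exact ⟨⟨(e, u), hu⟩, he⟩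

lemma srcSet_of_toGraph_nonempty (v : V)
    (hQ : {q : GEdge G | G.toGraph.src q = v}.Nonempty) :
    {e : E | G.src e = v}.Nonempty := by
  obtain ⟨q, hq⟩ := hQ
  exact ⟨q.1.1, hq⟩

lemma sum_srcSet (hfin : ∀ e : E, (G.rng e).Finite) {M : Type} [AddCommMonoid M] (v : V)
    (hS : {e : E | G.src e = v}.Finite)
    (hQ : {q : GEdge G | G.toGraph.src q = v}.Finite) (F : GEdge G → M) :
    ∑ q ∈ hQ.toFinset, F q =
      ∑ e ∈ hS.toFinset, ∑ u ∈ (hfin e).toFinset.attach,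
        F ⟨(e, u.1), (Set.Finite.mem_toFinset _).mp u.2⟩ := by
  rw [Finset.sum_sigma']
  refine Finset.sum_nbij'
    (i := fun (q : GEdge G) =>
      (⟨q.1.1, ⟨q.1.2, (hfin _).mem_toFinset.mpr q.2⟩⟩ :
        (e : E) × {u : V // u ∈ (hfin e).toFinset}))
    (j := fun (x : (e : E) × {u : V // u ∈ (hfin e).toFinset}) =>
      (⟨(x.1, x.2.1), (Set.Finite.mem_toFinset _).mp x.2.2⟩ : GEdge G))
    ?_ ?_ ?_ ?_ ?_
  · intro q hq
    exact Finset.mem_sigma.mpr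
      ⟨hS.mem_toFinset.mpr (hQ.mem_toFinset.mp hq), Finset.mem_attach _ _⟩
  · intro x hx
    exact hQ.mem_toFinset.mpr (hS.mem_toFinset.mp (Finset.mem_sigma.mp hx).1)
  · intro q _; rfl
  · intro x _; rfl
  · intro q _; rfl

end Ultragraph
namespace Ultragraph

variable {V E : Type} (R : Type) [CommRing R] (G : Ultragraph V E)
  (hfin : ∀ e : E, (G.rng e).Finite)

noncomputable def sS (e : E) : LPABig R G.toGraph :=
  ∑ u ∈ (hfin e).toFinset.attach,
    sgen R G.toGraph ⟨(e, u.1), (Set.Finite.mem_toFinset _).mp u.2⟩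

noncomputable def tS (e : E) : LPABig R G.toGraph :=
  ∑ u ∈ (hfin e).toFinset.attach,
    tgen R G.toGraph ⟨(e, u.1), (Set.Finite.mem_toFinset _).mp u.2⟩

noncomputable def phiGen : LPAGen G → LPABig R G.toGraph
  | .edge e => sS R G hfin e
  | .star e => tS R G hfin e
  | .proj _ hA => pS R G.toGraph (inG0_finite G hfin hA).toFinset

noncomputable def PhiF : FA R G →ₐ[R] LPABig R G.toGraph :=
  FreeAlgebra.lift R (phiGen R G hfin)

lemma PhiF_gen (g : LPAGen G) : PhiF R G hfin (X R G g) = phiGen R G hfin g :=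
  FreeAlgebra.lift_ι_apply _ _

lemma sS_mul_tS (e : E) :
    sS R G hfin e * tS R G hfin e =
      ∑ u ∈ (hfin e).toFinset.attach,
        sgen R G.toGraph ⟨(e, u.1), (Set.Finite.mem_toFinset _).mp u.2⟩ *
        tgen R G.toGraph ⟨(e, u.1), (Set.Finite.mem_toFinset _).mp u.2⟩ := by
  rw [sS, tS, Finset.sum_mul_sum]
  refine Finset.sum_congr rfl fun u _ => ?_
  refine Finset.sum_eq_single_of_mem u (Finset.mem_attach _ _) fun w _ hw => ?_
  refine sgen_mul_tgen_disj R G.toGraph _ _ ?_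
  have : u.1 ≠ w.1 := fun h => hw (Subtype.ext h.symm)
  exact Set.eq_empty_iff_forall_notMem.mpr fun x hx =>
    this ((show x = u.1 from hx.1).symm.trans (show x = w.1 from hx.2))

lemma phi_rel {x y : FA R G} (h : LeavittRel R G x y) :
    PhiF R G hfin x = PhiF R G hfin y := by
  classical
  induction h with
  | proj_empty h =>
      rw [map_zero, PhiF_gen]
      show pS R G.toGraph _ = 0
      rw [show (inG0_finite G hfin h).toFinset = ∅ by ext x; simp, pS_empty]
  | proj_mul A B hA hB =>
      rw [map_mul, PhiF_gen, PhiF_gen, PhiF_gen]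
      show pS R G.toGraph _ * pS R G.toGraph _ = pS R G.toGraph _
      rw [pS_mul]
      congr 1
      ext x; simp
  | proj_union A B hA hB =>
      rw [map_sub, map_add, PhiF_gen, PhiF_gen, PhiF_gen, PhiF_gen]
      show pS R G.toGraph _ = pS R G.toGraph _ + pS R G.toGraph _ - pS R G.toGraph _
      rw [show (inG0_finite G hfin (hA.union hB)).toFinset =
            (inG0_finite G hfin hA).toFinset ∪ (inG0_finite G hfin hB).toFinset by
          ext x; simp,
        pS_union]
      congr 2
      ext x; simp
  | src_mul e =>
      rw [map_mul, PhiF_gen, PhiF_gen]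
      show pS R G.toGraph _ * sS R G hfin e = sS R G hfin e
      rw [show (inG0_finite G hfin (InG0.vertex (G.src e))).toFinset = {G.src e} by
          ext x; simp,
        pS_singleton, sS, Finset.mul_sum]
      exact Finset.sum_congr rfl fun u _ =>
        pgen_mul_sgen_mem R G.toGraph _ _ _ rfl
  | mul_rng e =>
      rw [map_mul, PhiF_gen, PhiF_gen]
      show sS R G hfin e * pS R G.toGraph _ = sS R G hfin e
      rw [sS, Finset.sum_mul]
      refine Finset.sum_congr rfl fun u _ => ?_
      rw [pS, Finset.mul_sum,
        Finset.sum_congr rfl fun v _ => sgenH_mul_pv R G _ v,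
        Finset.sum_ite_eq]
      exact if_pos ((inG0_finite G hfin (InG0.range e)).mem_toFinset.mpr
        ((hfin e).mem_toFinset.mp u.2))
  | rng_mul_star e =>
      rw [map_mul, PhiF_gen, PhiF_gen]
      show pS R G.toGraph _ * tS R G hfin e = tS R G hfin e
      rw [tS, Finset.mul_sum]
      refine Finset.sum_congr rfl fun u _ => ?_
      rw [pS, Finset.sum_mul,
        Finset.sum_congr rfl fun v _ => pv_mul_tgenH R G v _,
        Finset.sum_ite_eq']
      exact if_pos ((inG0_finite G hfin (InG0.range e)).mem_toFinset.mpr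
        ((hfin e).mem_toFinset.mp u.2))
  | star_mul_src e =>
      rw [map_mul, PhiF_gen, PhiF_gen]
      show tS R G hfin e * pS R G.toGraph _ = tS R G hfin e
      rw [show (inG0_finite G hfin (InG0.vertex (G.src e))).toFinset = {G.src e} by
          ext x; simp,
        pS_singleton, tS, Finset.sum_mul]
      exact Finset.sum_congr rfl fun u _ =>
        tgen_mul_pgen_mem R G.toGraph _ _ _ rfl
  | star_mul_same e =>
      rw [map_mul, PhiF_gen, PhiF_gen, PhiF_gen]
      show tS R G hfin e * sS R G hfin e = pS R G.toGraph _
      rw [tS, sS, Finset.sum_mul_sum]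
      have hdiag : ∀ u ∈ (hfin e).toFinset.attach,
          (∑ w ∈ (hfin e).toFinset.attach,
            tgen R G.toGraph ⟨(e, u.1), (Set.Finite.mem_toFinset _).mp u.2⟩ *
            sgen R G.toGraph ⟨(e, w.1), (Set.Finite.mem_toFinset _).mp w.2⟩) =
          pgen R G.toGraph {u.1} (InG0.vertex u.1) := by
        intro u _
        rw [Finset.sum_eq_single_of_mem u (Finset.mem_attach _ _) fun w _ hw =>
          tgen_sgen_ne R G.toGraph _ _ fun hq =>
            hw (Subtype.ext (congrArg (fun (q : GEdge G) => q.1.2) hq).symm)]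
        exact tgen_sgen_same R G.toGraph _
      rw [Finset.sum_congr rfl hdiag, pS]
      exact Finset.sum_attach ((hfin e).toFinset)
        (fun v => pgen R G.toGraph {v} (InG0.vertex v))
  | star_mul_ne e f hne =>
      rw [map_mul, map_zero, PhiF_gen, PhiF_gen]
      show tS R G hfin e * sS R G hfin f = 0
      rw [tS, sS, Finset.sum_mul_sum]
      refine Finset.sum_eq_zero fun u _ => Finset.sum_eq_zero fun w _ => ?_
      exact tgen_sgen_ne R G.toGraph _ _ fun hq =>
        hne (congrArg (fun (q : GEdge G) => q.1.1) hq)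
  | ck v hSf hSn =>
      rw [map_sum, PhiF_gen]
      show pS R G.toGraph _ = _
      rw [show (inG0_finite G hfin (InG0.vertex v)).toFinset = {v} by ext x; simp,
        pS_singleton,
        ck_rel R G.toGraph v (srcSet_toGraph_finite G hfin v hSf)
          (srcSet_toGraph_nonempty G v hSn),
        sum_srcSet G hfin v hSf (srcSet_toGraph_finite G hfin v hSf)
          (fun q => sgen R G.toGraph q * tgen R G.toGraph q)]
      refine Finset.sum_congr rfl fun e _ => ?_
      rw [map_mul, PhiF_gen, PhiF_gen]
      exact (sS_mul_tS R G hfin e).symm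

noncomputable def phi : LPABig R G →ₐ[R] LPABig R G.toGraph :=
  RingQuot.liftAlgHom R ⟨PhiF R G hfin, fun _ _ h => phi_rel R G hfin h⟩

lemma phi_gen (g : LPAGen G) : phi R G hfin (gen R G g) = phiGen R G hfin g := by
  rw [gen, phi, RingQuot.liftAlgHom_mkAlgHom_apply, PhiF_gen]

lemma phi_pgen {A : Set V} (hA : G.InG0 A) :
    phi R G hfin (pgen R G A hA) = pS R G.toGraph (inG0_finite G hfin hA).toFinset :=
  phi_gen R G hfin (.proj A hA)

lemma phi_sgen (e : E) : phi R G hfin (sgen R G e) = sS R G hfin e :=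
  phi_gen R G hfin (.edge e)

lemma phi_tgen (e : E) : phi R G hfin (tgen R G e) = tS R G hfin e :=
  phi_gen R G hfin (.star e)

end Ultragraph
namespace Ultragraph

variable {V E : Type} (R : Type) [CommRing R] (G : Ultragraph V E)

lemma hfinH : ∀ q : GEdge G, (G.toGraph.rng q).Finite := fun _ => Set.finite_singleton _

noncomputable def psiGen : LPAGen G.toGraph → LPABig R G
  | .edge q => sgen R G q.1.1 * pgen R G {q.1.2} (InG0.vertex q.1.2)
  | .star q => pgen R G {q.1.2} (InG0.vertex q.1.2) * tgen R G q.1.1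
  | .proj _ hA => pS R G (inG0_finite G.toGraph (hfinH G) hA).toFinset

noncomputable def PsiF : FA R G.toGraph →ₐ[R] LPABig R G :=
  FreeAlgebra.lift R (psiGen R G)

lemma PsiF_gen (g : LPAGen G.toGraph) : PsiF R G (X R G.toGraph g) = psiGen R G g :=
  FreeAlgebra.lift_ι_apply _ _

lemma pS_toFinset_rng (e : E) (hf : (G.rng e).Finite) :
    pS R G hf.toFinset = pgen R G (G.rng e) (InG0.range e) := by
  rw [pS_eq_pgen R G _ (by rw [Set.Finite.coe_toFinset]; exact InG0.range e)]
  exact pgen_congr R G _ _ (Set.Finite.coe_toFinset _)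

lemma psi_rel (hfin : ∀ e : E, (G.rng e).Finite) {x y : FA R G.toGraph}
    (h : LeavittRel R G.toGraph x y) : PsiF R G x = PsiF R G y := by
  classical
  induction h with
  | proj_empty h =>
      rw [map_zero, PsiF_gen]
      show pS R G _ = 0
      rw [show (inG0_finite G.toGraph (hfinH G) h).toFinset = ∅ by ext x; simp, pS_empty]
  | proj_mul A B hA hB =>
      rw [map_mul, PsiF_gen, PsiF_gen, PsiF_gen]
      show pS R G _ * pS R G _ = pS R G _
      rw [pS_mul]
      congr 1
      ext x; simp
  | proj_union A B hA hB =>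
      rw [map_sub, map_add, PsiF_gen, PsiF_gen, PsiF_gen, PsiF_gen]
      show pS R G _ = pS R G _ + pS R G _ - pS R G _
      rw [show (inG0_finite G.toGraph (hfinH G) (hA.union hB)).toFinset =
            (inG0_finite G.toGraph (hfinH G) hA).toFinset ∪
            (inG0_finite G.toGraph (hfinH G) hB).toFinset by ext x; simp,
        pS_union]
      congr 2
      ext x; simp
  | src_mul q =>
      rw [map_mul, PsiF_gen, PsiF_gen]
      show pS R G _ * (sgen R G q.1.1 * pgen R G {q.1.2} (InG0.vertex q.1.2)) =
        sgen R G q.1.1 * pgen R G {q.1.2} (InG0.vertex q.1.2)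
      rw [show (inG0_finite G.toGraph (hfinH G)
            (InG0.vertex (G.toGraph.src q))).toFinset = {G.src q.1.1} by
          ext x; simp [toGraph],
        pS_singleton, ← mul_assoc,
        pgen_mul_sgen_mem R G _ (InG0.vertex (G.src q.1.1)) q.1.1 rfl]
  | mul_rng q =>
      rw [map_mul, PsiF_gen, PsiF_gen]
      show sgen R G q.1.1 * pgen R G {q.1.2} (InG0.vertex q.1.2) * pS R G _ =
        sgen R G q.1.1 * pgen R G {q.1.2} (InG0.vertex q.1.2)
      rw [show (inG0_finite G.toGraph (hfinH G) (InG0.range q)).toFinset = {q.1.2} by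
          ext x; simp [toGraph],
        pS_singleton, mul_assoc, pgen_mul,
        pgen_congr R G _ (InG0.vertex q.1.2) (Set.inter_self _)]
  | rng_mul_star q =>
      rw [map_mul, PsiF_gen, PsiF_gen]
      show pS R G _ * (pgen R G {q.1.2} (InG0.vertex q.1.2) * tgen R G q.1.1) =
        pgen R G {q.1.2} (InG0.vertex q.1.2) * tgen R G q.1.1
      rw [show (inG0_finite G.toGraph (hfinH G) (InG0.range q)).toFinset = {q.1.2} by
          ext x; simp [toGraph],
        pS_singleton, ← mul_assoc, pgen_mul,
        pgen_congr R G _ (InG0.vertex q.1.2) (Set.inter_self _)]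
  | star_mul_src q =>
      rw [map_mul, PsiF_gen, PsiF_gen]
      show pgen R G {q.1.2} (InG0.vertex q.1.2) * tgen R G q.1.1 * pS R G _ =
        pgen R G {q.1.2} (InG0.vertex q.1.2) * tgen R G q.1.1
      rw [show (inG0_finite G.toGraph (hfinH G)
            (InG0.vertex (G.toGraph.src q))).toFinset = {G.src q.1.1} by
          ext x; simp [toGraph],
        pS_singleton, mul_assoc, tgen_src R G q.1.1]
  | star_mul_same q =>
      rw [map_mul, PsiF_gen, PsiF_gen, PsiF_gen]
      show pgen R G {q.1.2} (InG0.vertex q.1.2) * tgen R G q.1.1 *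
          (sgen R G q.1.1 * pgen R G {q.1.2} (InG0.vertex q.1.2)) = pS R G _
      rw [show (inG0_finite G.toGraph (hfinH G) (InG0.range q)).toFinset = {q.1.2} by
          ext x; simp [toGraph],
        pS_singleton,
        mul_assoc (pgen R G {q.1.2} (InG0.vertex q.1.2)) (tgen R G q.1.1),
        ← mul_assoc (tgen R G q.1.1), tgen_sgen_same, pgen_mul,
        pgen_congr R G _ (InG0.vertex q.1.2)
          (Set.inter_eq_right.mpr (Set.singleton_subset_iff.mpr q.2)),
        pgen_mul, pgen_congr R G _ (InG0.vertex q.1.2) (Set.inter_self _)]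
  | star_mul_ne q q' hne =>
      rw [map_mul, map_zero, PsiF_gen, PsiF_gen]
      show pgen R G {q.1.2} (InG0.vertex q.1.2) * tgen R G q.1.1 *
          (sgen R G q'.1.1 * pgen R G {q'.1.2} (InG0.vertex q'.1.2)) = 0
      by_cases hef : q.1.1 = q'.1.1
      · have huw : q.1.2 ≠ q'.1.2 := fun h2 => hne (Subtype.ext (Prod.ext hef h2))
        rw [mul_assoc (pgen R G {q.1.2} (InG0.vertex q.1.2)) (tgen R G q.1.1),
          ← mul_assoc (tgen R G q.1.1), ← hef, tgen_sgen_same, pgen_mul, pgen_mul,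
          pgen_of_empty R G _ (Set.eq_empty_iff_forall_notMem.mpr fun x hx =>
            huw ((show x = q.1.2 from hx.1).symm.trans
              (show x = q'.1.2 from hx.2.2)))]
      · rw [mul_assoc (pgen R G {q.1.2} (InG0.vertex q.1.2)) (tgen R G q.1.1),
          ← mul_assoc (tgen R G q.1.1), tgen_sgen_ne R G _ _ hef, zero_mul, mul_zero]
  | ck v hQf hQn =>
      rw [map_sum, PsiF_gen]
      show pS R G _ = _
      rw [show (inG0_finite G.toGraph (hfinH G) (InG0.vertex v)).toFinset = {v} by
          ext x; simp, pS_singleton]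
      have hSf := srcSet_of_toGraph_finite G v hQf
      have hSn := srcSet_of_toGraph_nonempty G v hQn
      rw [ck_rel R G v hSf hSn]
      have hmap : ∀ q ∈ hQf.toFinset,
          PsiF R G (X R G.toGraph (.edge q) * X R G.toGraph (.star q)) =
            (sgen R G q.1.1 * pgen R G {q.1.2} (InG0.vertex q.1.2)) *
            (pgen R G {q.1.2} (InG0.vertex q.1.2) * tgen R G q.1.1) := by
        intro q _
        rw [map_mul, PsiF_gen, PsiF_gen]
        rfl
      rw [Finset.sum_congr rfl hmap,
        sum_srcSet G hfin v hSf hQf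
          (fun q => (sgen R G q.1.1 * pgen R G {q.1.2} (InG0.vertex q.1.2)) *
            (pgen R G {q.1.2} (InG0.vertex q.1.2) * tgen R G q.1.1))]
      refine Finset.sum_congr rfl fun e _ => ?_
      have hterm : ∀ u ∈ (hfin e).toFinset.attach,
          (sgen R G e * pgen R G {u.1} (InG0.vertex u.1)) *
            (pgen R G {u.1} (InG0.vertex u.1) * tgen R G e) =
          sgen R G e * (pgen R G {u.1} (InG0.vertex u.1) * tgen R G e) := by
        intro u _
        rw [mul_assoc (sgen R G e), ← mul_assoc (pgen R G {u.1} (InG0.vertex u.1))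
          (pgen R G {u.1} (InG0.vertex u.1)), pgen_mul,
          pgen_congr R G _ (InG0.vertex u.1) (Set.inter_self _)]
      have hp : ∑ u ∈ (hfin e).toFinset.attach,
          pgen R G {u.1} (InG0.vertex u.1) = pgen R G (G.rng e) (InG0.range e) :=
        (Finset.sum_attach ((hfin e).toFinset)
          (fun w => pgen R G {w} (InG0.vertex w))).trans (pS_toFinset_rng R G e (hfin e))
      have h2 : ∑ u ∈ (hfin e).toFinset.attach,
          (sgen R G e * pgen R G {u.1} (InG0.vertex u.1)) *
            (pgen R G {u.1} (InG0.vertex u.1) * tgen R G e) =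
          sgen R G e * tgen R G e := by
        rw [Finset.sum_congr rfl hterm, ← Finset.mul_sum, ← Finset.sum_mul, hp, rng_tgen]
      exact h2.symm

noncomputable def psi (hfin : ∀ e : E, (G.rng e).Finite) :
    LPABig R G.toGraph →ₐ[R] LPABig R G :=
  RingQuot.liftAlgHom R ⟨PsiF R G, fun _ _ h => psi_rel R G hfin h⟩

lemma psi_gen (hfin : ∀ e : E, (G.rng e).Finite) (g : LPAGen G.toGraph) :
    psi R G hfin (gen R G.toGraph g) = psiGen R G g := by
  rw [gen, psi, RingQuot.liftAlgHom_mkAlgHom_apply, PsiF_gen]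

end Ultragraph
namespace Ultragraph

set_option maxHeartbeats 1000000
set_option synthInstance.maxHeartbeats 1000000

variable {V E : Type} (R : Type) [CommRing R] (G : Ultragraph V E)
  (hfin : ∀ e : E, (G.rng e).Finite)

lemma phi_pv (v : V) :
    phi R G hfin (pgen R G {v} (InG0.vertex v)) =
      pgen R G.toGraph {v} (InG0.vertex v) := by
  rw [phi_pgen, show (inG0_finite G hfin (InG0.vertex v)).toFinset = {v} by ext x; simp,
    pS_singleton]

lemma psi_pgen {A : Set V} (hA : G.toGraph.InG0 A) :
    psi R G hfin (pgen R G.toGraph A hA) =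
      pS R G (inG0_finite G.toGraph (hfinH G) hA).toFinset :=
  psi_gen R G hfin (.proj A hA)

lemma psi_pv (v : V) :
    psi R G hfin (pgen R G.toGraph {v} (InG0.vertex v)) =
      pgen R G {v} (InG0.vertex v) := by
  rw [psi_pgen, show (inG0_finite G.toGraph (hfinH G) (InG0.vertex v)).toFinset = {v} by
    ext x; simp, pS_singleton]

lemma psi_sgen (q : GEdge G) :
    psi R G hfin (sgen R G.toGraph q) =
      sgen R G q.1.1 * pgen R G {q.1.2} (InG0.vertex q.1.2) :=
  psi_gen R G hfin (.edge q)

lemma psi_tgen (q : GEdge G) :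
    psi R G hfin (tgen R G.toGraph q) =
      pgen R G {q.1.2} (InG0.vertex q.1.2) * tgen R G q.1.1 :=
  psi_gen R G hfin (.star q)

lemma sum_attach_pv (e : E) :
    ∑ u ∈ (hfin e).toFinset.attach, pgen R G {u.1} (InG0.vertex u.1) =
      pgen R G (G.rng e) (InG0.range e) :=
  (Finset.sum_attach ((hfin e).toFinset)
    (fun w => pgen R G {w} (InG0.vertex w))).trans (pS_toFinset_rng R G e (hfin e))

lemma psi_phi_gen (g : LPAGen G) :
    psi R G hfin (phi R G hfin (gen R G g)) = gen R G g := by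
  cases g with
  | edge e =>
      rw [phi_gen]
      show psi R G hfin (sS R G hfin e) = sgen R G e
      have hstep : ∀ u ∈ (hfin e).toFinset.attach,
          psi R G hfin (sgen R G.toGraph ⟨(e, u.1), (Set.Finite.mem_toFinset _).mp u.2⟩) =
            sgen R G e * pgen R G {u.1} (InG0.vertex u.1) :=
        fun u _ => psi_sgen R G hfin _
      rw [sS, map_sum, Finset.sum_congr rfl hstep,
        ← Finset.mul_sum, sum_attach_pv, sgen_rng]
  | star e =>
      rw [phi_gen]
      show psi R G hfin (tS R G hfin e) = tgen R G e
      have hstep : ∀ u ∈ (hfin e).toFinset.attach,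
          psi R G hfin (tgen R G.toGraph ⟨(e, u.1), (Set.Finite.mem_toFinset _).mp u.2⟩) =
            pgen R G {u.1} (InG0.vertex u.1) * tgen R G e :=
        fun u _ => psi_tgen R G hfin _
      rw [tS, map_sum, Finset.sum_congr rfl hstep,
        ← Finset.sum_mul, sum_attach_pv, rng_tgen]
  | proj A hA =>
      rw [phi_gen]
      show psi R G hfin (pS R G.toGraph (inG0_finite G hfin hA).toFinset) = pgen R G A hA
      rw [pS, map_sum, Finset.sum_congr rfl fun v _ => psi_pv R G hfin v]
      exact (sum_singletons R G hA (inG0_finite G hfin hA)).symm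

lemma phi_psi_gen (g : LPAGen G.toGraph) :
    phi R G hfin (psi R G hfin (gen R G.toGraph g)) = gen R G.toGraph g := by
  classical
  cases g with
  | edge q =>
      rw [psi_gen]
      show phi R G hfin (sgen R G q.1.1 * pgen R G {q.1.2} (InG0.vertex q.1.2)) =
        sgen R G.toGraph q
      rw [map_mul, phi_sgen, phi_pv, sS, Finset.sum_mul,
        Finset.sum_congr rfl fun w _ => sgenH_mul_pv R G _ q.1.2,
        Finset.sum_eq_single_of_mem
          (⟨q.1.2, (hfin q.1.1).mem_toFinset.mpr q.2⟩ :
            {x // x ∈ (hfin q.1.1).toFinset})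
          (Finset.mem_attach _ _)
          (fun w _ hw => if_neg fun hh => hw (Subtype.ext hh)),
        if_pos rfl]
  | star q =>
      rw [psi_gen]
      show phi R G hfin (pgen R G {q.1.2} (InG0.vertex q.1.2) * tgen R G q.1.1) =
        tgen R G.toGraph q
      rw [map_mul, phi_tgen, phi_pv, tS, Finset.mul_sum,
        Finset.sum_congr rfl fun w _ => pv_mul_tgenH R G q.1.2 _,
        Finset.sum_eq_single_of_mem
          (⟨q.1.2, (hfin q.1.1).mem_toFinset.mpr q.2⟩ :
            {x // x ∈ (hfin q.1.1).toFinset})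
          (Finset.mem_attach _ _)
          (fun w _ hw => if_neg fun hh => hw (Subtype.ext hh.symm)),
        if_pos rfl]
  | proj A hA =>
      rw [psi_gen]
      show phi R G hfin (pS R G (inG0_finite G.toGraph (hfinH G) hA).toFinset) =
        pgen R G.toGraph A hA
      rw [pS, map_sum, Finset.sum_congr rfl fun v _ => phi_pv R G hfin v]
      exact (sum_singletons R G.toGraph hA (inG0_finite G.toGraph (hfinH G) hA)).symm

lemma psi_phi (x : LPABig R G) : psi R G hfin (phi R G hfin x) = x := by
  have h : (psi R G hfin).comp (phi R G hfin) = AlgHom.id R (LPABig R G) := by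
    apply RingQuot.ringQuot_ext'
    apply FreeAlgebra.hom_ext
    funext g
    show psi R G hfin (phi R G hfin (gen R G g)) = gen R G g
    exact psi_phi_gen R G hfin g
  exact congrArg (fun f => f x) (congrArg (fun (f : _ →ₐ[R] _) => (f : LPABig R G → LPABig R G)) h)

lemma phi_psi (y : LPABig R G.toGraph) : phi R G hfin (psi R G hfin y) = y := by
  have h : (phi R G hfin).comp (psi R G hfin) = AlgHom.id R (LPABig R G.toGraph) := by
    apply RingQuot.ringQuot_ext'
    apply FreeAlgebra.hom_ext
    funext g
    show phi R G hfin (psi R G hfin (gen R G.toGraph g)) = gen R G.toGraph g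
    exact phi_psi_gen R G hfin g
  exact congrArg (fun f => f y)
    (congrArg (fun (f : _ →ₐ[R] _) => (f : LPABig R G.toGraph → LPABig R G.toGraph)) h)

lemma phi_mem {x : LPABig R G} (hx : x ∈ LPA R G) :
    phi R G hfin x ∈ LPA R G.toGraph := by
  refine NonUnitalAlgebra.adjoin_induction
    (p := fun y _ => phi R G hfin y ∈ LPA R G.toGraph) ?_ ?_ ?_ ?_ ?_ hx
  · rintro y ⟨g, rfl⟩
    rw [phi_gen]
    cases g with
    | edge e =>
        exact sum_mem fun u _ => NonUnitalAlgebra.subset_adjoin R ⟨.edge _, rfl⟩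
    | star e =>
        exact sum_mem fun u _ => NonUnitalAlgebra.subset_adjoin R ⟨.star _, rfl⟩
    | proj A hA =>
        exact sum_mem fun v _ => NonUnitalAlgebra.subset_adjoin R ⟨.proj _ _, rfl⟩
  · intro a b _ _ ha hb
    rw [map_add]; exact add_mem ha hb
  · show phi R G hfin 0 ∈ LPA R G.toGraph
    rw [map_zero]; exact zero_mem _
  · intro a b _ _ ha hb
    rw [map_mul]; exact mul_mem ha hb
  · intro r a _ ha
    rw [map_smul]; exact SMulMemClass.smul_mem r ha

lemma psi_mem {y : LPABig R G.toGraph} (hy : y ∈ LPA R G.toGraph) :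
    psi R G hfin y ∈ LPA R G := by
  refine NonUnitalAlgebra.adjoin_induction
    (p := fun z _ => psi R G hfin z ∈ LPA R G) ?_ ?_ ?_ ?_ ?_ hy
  · rintro y ⟨g, rfl⟩
    rw [psi_gen]
    cases g with
    | edge q =>
        exact mul_mem (NonUnitalAlgebra.subset_adjoin R ⟨.edge _, rfl⟩)
          (NonUnitalAlgebra.subset_adjoin R ⟨.proj _ _, rfl⟩)
    | star q =>
        exact mul_mem (NonUnitalAlgebra.subset_adjoin R ⟨.proj _ _, rfl⟩)
          (NonUnitalAlgebra.subset_adjoin R ⟨.star _, rfl⟩)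
    | proj A hA =>
        exact sum_mem fun v _ => NonUnitalAlgebra.subset_adjoin R ⟨.proj _ _, rfl⟩
  · intro a b _ _ ha hb
    rw [map_add]; exact add_mem ha hb
  · show psi R G hfin 0 ∈ LPA R G
    rw [map_zero]; exact zero_mem _
  · intro a b _ _ ha hb
    rw [map_mul]; exact mul_mem ha hb
  · intro r a _ ha
    rw [map_smul]; exact SMulMemClass.smul_mem r ha

/-- The restriction of `phi` to the Leavitt path algebras. -/
noncomputable def piRes : LPA R G →ₙₐ[R] LPA R G.toGraph :=
  NonUnitalAlgHom.codRestrict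
    ((phi R G hfin).toNonUnitalAlgHom.comp (NonUnitalSubalgebraClass.subtype (LPA R G)))
    (LPA R G.toGraph) (fun x => phi_mem R G hfin x.2)

lemma piRes_coe (x : LPA R G) : (piRes R G hfin x : LPABig R G.toGraph) = phi R G hfin x :=
  rfl

end Ultragraph
namespace Ultragraph

variable {V E : Type} (R : Type) [CommRing R] (G : Ultragraph V E)

lemma lpa_mul_neg (x y : LPABig R G) : x * -y = -(x * y) := mul_neg x y
lemma lpa_neg_mul (x y : LPABig R G) : -x * y = -(x * y) := neg_mul x y
lemma lpa_smul_neg (l : R) (x : LPABig R G) : l • (-x) = -(l • x) := smul_neg l x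

lemma sPath_nil : sPath R G [] = 1 := by simp [sPath]

lemma sPath_cons (e : E) (α : List E) :
    sPath R G (e :: α) = sgen R G e * sPath R G α := by simp [sPath]

lemma tPath_nil : tPath R G [] = 1 := by simp [tPath]

lemma tPath_cons (e : E) (β : List E) :
    tPath R G (e :: β) = tPath R G β * tgen R G e := by
  rw [tPath, tPath, List.reverse_cons, List.map_append, List.prod_append]
  simp

lemma mono_nil_nil (A : Set V) (hA : G.InG0 A) :
    mono R G [] A hA [] = pgen R G A hA := by
  rw [mono, sPath_nil, tPath_nil, one_mul, mul_one]

lemma mono_nil_left (A : Set V) (hA : G.InG0 A) (β : List E) :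
    mono R G [] A hA β = pgen R G A hA * tPath R G β := by
  rw [mono, sPath_nil, one_mul]

lemma mono_nil_right (α : List E) (A : Set V) (hA : G.InG0 A) :
    mono R G α A hA [] = sPath R G α * pgen R G A hA := by
  rw [mono, tPath_nil, mul_one]

lemma mono_cons_left (e : E) (α : List E) (A : Set V) (hA : G.InG0 A) (β : List E) :
    mono R G (e :: α) A hA β = sgen R G e * mono R G α A hA β := by
  simp only [mono, sPath_cons, mul_assoc]

lemma mono_cons_right (α : List E) (A : Set V) (hA : G.InG0 A) (e : E) (β : List E) :
    mono R G α A hA (e :: β) = mono R G α A hA β * tgen R G e := by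
  rw [mono, mono, tPath_cons, ← mul_assoc]

lemma pgen_mem_zComp (A : Set V) (hA : G.InG0 A) : pgen R G A hA ∈ zComp R G 0 :=
  AddSubgroup.subset_closure ⟨1, [], [], A, hA, List.isChain_nil, List.isChain_nil,
    by simp, by rw [one_smul, mono_nil_nil]⟩

lemma zComp_smul (m : ℤ) (l : R) {x : LPABig R G} (hx : x ∈ zComp R G m) :
    l • x ∈ zComp R G m := by
  refine AddSubgroup.closure_induction
    (p := fun y _ => l • y ∈ zComp R G m) ?_ ?_ ?_ ?_ hx
  · rintro y ⟨l', α, β, A, hA, hα, hβ, hdeg, rfl⟩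
    rw [smul_smul]
    exact AddSubgroup.subset_closure ⟨l * l', α, β, A, hA, hα, hβ, hdeg, rfl⟩
  · show l • (0 : LPABig R G) ∈ zComp R G m
    rw [smul_zero]; exact zero_mem _
  · intro a b _ _ ha hb
    show l • (a + b) ∈ zComp R G m
    rw [smul_add]; exact add_mem ha hb
  · intro a _ ha
    show l • (-a) ∈ zComp R G m
    have h0 := lpa_smul_neg R G l a
    rw [h0]; exact neg_mem ha

lemma zComp_sgen_mul (e : E) (m : ℤ) {x : LPABig R G} (hx : x ∈ zComp R G m) :
    sgen R G e * x ∈ zComp R G (m + 1) := by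
  refine AddSubgroup.closure_induction
    (p := fun y _ => sgen R G e * y ∈ zComp R G (m + 1)) ?_ ?_ ?_ ?_ hx
  · rintro y ⟨l, α, β, A, hA, hα, hβ, hdeg, rfl⟩
    rw [mul_smul_comm]
    cases α with
    | nil =>
        have hx2 : sgen R G e * mono R G [] A hA β =
            mono R G [e] (G.rng e ∩ A) ((InG0.range e).inter hA) β := by
          rw [mono_nil_left, ← mul_assoc, sgen_mul_pgen, mul_assoc, ← mono_nil_left,
            ← mono_cons_left]
        rw [hx2]
        refine AddSubgroup.subset_closure ⟨l, [e], β, _, _, List.isChain_singleton e, hβ, ?_, rfl⟩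
        simp only [List.length_cons, List.length_nil] at hdeg ⊢
        push_cast at hdeg ⊢
        omega
    | cons f rest =>
        by_cases hc : G.src f ∈ G.rng e
        · rw [← mono_cons_left]
          refine AddSubgroup.subset_closure ⟨l, e :: f :: rest, β, A, hA,
            List.isChain_cons_cons.mpr ⟨hc, hα⟩, hβ, ?_, rfl⟩
          simp only [List.length_cons] at hdeg ⊢
          push_cast at hdeg ⊢
          omega
        · rw [mono_cons_left, ← mul_assoc, sgen_mul_sgen R G e f hc, zero_mul, smul_zero]
          exact zero_mem _
  · show sgen R G e * (0 : LPABig R G) ∈ zComp R G (m + 1)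
    rw [mul_zero]; exact zero_mem _
  · intro a b _ _ ha hb
    show sgen R G e * (a + b) ∈ zComp R G (m + 1)
    rw [mul_add]; exact add_mem ha hb
  · intro a _ ha
    show sgen R G e * (-a) ∈ zComp R G (m + 1)
    have h0 := lpa_mul_neg R G (sgen R G e) a
    rw [h0]; exact neg_mem ha

lemma zComp_mul_tgen (e : E) (m : ℤ) {x : LPABig R G} (hx : x ∈ zComp R G m) :
    x * tgen R G e ∈ zComp R G (m - 1) := by
  refine AddSubgroup.closure_induction
    (p := fun y _ => y * tgen R G e ∈ zComp R G (m - 1)) ?_ ?_ ?_ ?_ hx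
  · rintro y ⟨l, α, β, A, hA, hα, hβ, hdeg, rfl⟩
    rw [smul_mul_assoc]
    cases β with
    | nil =>
        have hx2 : mono R G α A hA [] * tgen R G e =
            mono R G α (A ∩ G.rng e) (hA.inter (InG0.range e)) [e] := by
          rw [mono_nil_right, mul_assoc, pgen_mul_tgen, ← mul_assoc, ← mono_nil_right,
            ← mono_cons_right]
        rw [hx2]
        refine AddSubgroup.subset_closure ⟨l, α, [e], _, _, hα, List.isChain_singleton e, ?_, rfl⟩
        simp only [List.length_cons, List.length_nil] at hdeg ⊢
        push_cast at hdeg ⊢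
        omega
    | cons f rest =>
        by_cases hc : G.src f ∈ G.rng e
        · rw [← mono_cons_right]
          refine AddSubgroup.subset_closure ⟨l, α, e :: f :: rest, A, hA, hα,
            List.isChain_cons_cons.mpr ⟨hc, hβ⟩, ?_, rfl⟩
          simp only [List.length_cons] at hdeg ⊢
          push_cast at hdeg ⊢
          omega
        · rw [mono_cons_right, mul_assoc, tgen_mul_tgen R G f e hc, mul_zero, smul_zero]
          exact zero_mem _
  · show (0 : LPABig R G) * tgen R G e ∈ zComp R G (m - 1)
    rw [zero_mul]; exact zero_mem _
  · intro a b _ _ ha hb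
    show (a + b) * tgen R G e ∈ zComp R G (m - 1)
    rw [add_mul]; exact add_mem ha hb
  · intro a _ ha
    show (-a) * tgen R G e ∈ zComp R G (m - 1)
    have h0 := lpa_neg_mul R G a (tgen R G e)
    rw [h0]; exact neg_mem ha

lemma zComp_mul_pgen (B : Set V) (hB : G.InG0 B) (m : ℤ) {x : LPABig R G}
    (hx : x ∈ zComp R G m) : x * pgen R G B hB ∈ zComp R G m := by
  refine AddSubgroup.closure_induction
    (p := fun y _ => y * pgen R G B hB ∈ zComp R G m) ?_ ?_ ?_ ?_ hx
  · rintro y ⟨l, α, β, A, hA, hα, hβ, hdeg, rfl⟩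
    rw [smul_mul_assoc]
    cases β with
    | nil =>
        rw [mono_nil_right, mul_assoc, pgen_mul, ← mono_nil_right]
        exact AddSubgroup.subset_closure ⟨l, α, [], _, _, hα, List.isChain_nil, hdeg, rfl⟩
    | cons f rest =>
        rw [mono_cons_right, mul_assoc]
        by_cases hc : G.src f ∈ B
        · rw [tgen_mul_pgen_mem R G f B hB hc, ← mono_cons_right]
          exact AddSubgroup.subset_closure ⟨l, α, f :: rest, A, hA, hα, hβ, hdeg, rfl⟩
        · rw [tgen_mul_pgen_not R G f B hB hc, mul_zero, smul_zero]
          exact zero_mem _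
  · show (0 : LPABig R G) * pgen R G B hB ∈ zComp R G m
    rw [zero_mul]; exact zero_mem _
  · intro a b _ _ ha hb
    show (a + b) * pgen R G B hB ∈ zComp R G m
    rw [add_mul]; exact add_mem ha hb
  · intro a _ ha
    show (-a) * pgen R G B hB ∈ zComp R G m
    have h0 := lpa_neg_mul R G a (pgen R G B hB)
    rw [h0]; exact neg_mem ha

lemma zComp_pgen_mul (B : Set V) (hB : G.InG0 B) (m : ℤ) {x : LPABig R G}
    (hx : x ∈ zComp R G m) : pgen R G B hB * x ∈ zComp R G m := by
  refine AddSubgroup.closure_induction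
    (p := fun y _ => pgen R G B hB * y ∈ zComp R G m) ?_ ?_ ?_ ?_ hx
  · rintro y ⟨l, α, β, A, hA, hα, hβ, hdeg, rfl⟩
    rw [mul_smul_comm]
    cases α with
    | nil =>
        rw [mono_nil_left, ← mul_assoc, pgen_mul, ← mono_nil_left]
        exact AddSubgroup.subset_closure ⟨l, [], β, _, _, List.isChain_nil, hβ, hdeg, rfl⟩
    | cons f rest =>
        rw [mono_cons_left, ← mul_assoc]
        by_cases hc : G.src f ∈ B
        · rw [pgen_mul_sgen_mem R G B hB f hc, ← mono_cons_left]
          exact AddSubgroup.subset_closure ⟨l, f :: rest, β, A, hA, hα, hβ, hdeg, rfl⟩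
        · rw [pgen_mul_sgen_not R G B hB f hc, zero_mul, smul_zero]
          exact zero_mem _
  · show pgen R G B hB * (0 : LPABig R G) ∈ zComp R G m
    rw [mul_zero]; exact zero_mem _
  · intro a b _ _ ha hb
    show pgen R G B hB * (a + b) ∈ zComp R G m
    rw [mul_add]; exact add_mem ha hb
  · intro a _ ha
    show pgen R G B hB * (-a) ∈ zComp R G m
    have h0 := lpa_mul_neg R G (pgen R G B hB) a
    rw [h0]; exact neg_mem ha

lemma zc_list_left {X : Type} (f : X → LPABig R G)
    (hf : ∀ (q : X) (y : LPABig R G) (m : ℤ), y ∈ zComp R G m → f q * y ∈ zComp R G (m + 1))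
    (γ : List X) (y : LPABig R G) (m : ℤ) (hy : y ∈ zComp R G m) :
    (γ.map f).prod * y ∈ zComp R G (m + γ.length) := by
  induction γ with
  | nil => simpa using hy
  | cons q rest ih =>
      have h2 := hf q _ _ ih
      have hint : m + ((q :: rest).length : ℤ) = (m + rest.length) + 1 := by
        simp only [List.length_cons]; push_cast; ring
      rw [List.map_cons, List.prod_cons, mul_assoc, hint]
      exact h2

lemma zc_list_right {X : Type} (f : X → LPABig R G)
    (hf : ∀ (q : X) (y : LPABig R G) (m : ℤ), y ∈ zComp R G m → y * f q ∈ zComp R G (m - 1))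
    (γ : List X) : ∀ (y : LPABig R G) (m : ℤ), y ∈ zComp R G m →
    y * (γ.map f).prod ∈ zComp R G (m - γ.length) := by
  induction γ with
  | nil => intro y m hy; simpa using hy
  | cons q rest ih =>
      intro y m hy
      have h2 := ih (y * f q) (m - 1) (hf q y m hy)
      have hint : m - ((q :: rest).length : ℤ) = (m - 1) - rest.length := by
        simp only [List.length_cons]; push_cast; ring
      rw [List.map_cons, List.prod_cons, ← mul_assoc, hint]
      exact h2

end Ultragraph
namespace Ultragraph

variable {V E : Type} (R : Type) [CommRing R] (G : Ultragraph V E)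
  (hfin : ∀ e : E, (G.rng e).Finite)

lemma pS_mem_zComp (s : Finset V) : pS R G s ∈ zComp R G 0 :=
  sum_mem fun v _ => pgen_mem_zComp R G {v} (InG0.vertex v)

lemma sS_mul_zc (e : E) (m : ℤ) {y : LPABig R G.toGraph}
    (hy : y ∈ zComp R G.toGraph m) :
    sS R G hfin e * y ∈ zComp R G.toGraph (m + 1) := by
  rw [sS, Finset.sum_mul]
  exact sum_mem fun u _ => zComp_sgen_mul R G.toGraph _ m hy

lemma zc_mul_tS (e : E) (m : ℤ) {y : LPABig R G.toGraph}
    (hy : y ∈ zComp R G.toGraph m) :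
    y * tS R G hfin e ∈ zComp R G.toGraph (m - 1) := by
  rw [tS, Finset.mul_sum]
  exact sum_mem fun u _ => zComp_mul_tgen R G.toGraph _ m hy

lemma phi_mono (α : List E) (A : Set V) (hA : G.InG0 A) (β : List E) :
    phi R G hfin (mono R G α A hA β) =
      (α.map (⇑(phi R G hfin) ∘ sgen R G)).prod *
        pS R G.toGraph (inG0_finite G hfin hA).toFinset *
        (β.reverse.map (⇑(phi R G hfin) ∘ tgen R G)).prod := by
  rw [mono, map_mul, map_mul, phi_pgen, sPath, tPath, map_list_prod, map_list_prod,
    List.map_map, List.map_map]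

lemma psi_mono (α : List (GEdge G)) (A : Set V) (hA : G.toGraph.InG0 A)
    (β : List (GEdge G)) :
    psi R G hfin (mono R G.toGraph α A hA β) =
      (α.map (⇑(psi R G hfin) ∘ sgen R G.toGraph)).prod *
        pS R G (inG0_finite G.toGraph (hfinH G) hA).toFinset *
        (β.reverse.map (⇑(psi R G hfin) ∘ tgen R G.toGraph)).prod := by
  rw [mono, map_mul, map_mul, psi_pgen, sPath, tPath, map_list_prod, map_list_prod,
    List.map_map, List.map_map]

lemma phi_zc (m : ℤ) {x : LPABig R G} (hx : x ∈ zComp R G m) :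
    phi R G hfin x ∈ zComp R G.toGraph m := by
  refine AddSubgroup.closure_induction
    (p := fun y _ => phi R G hfin y ∈ zComp R G.toGraph m) ?_ ?_ ?_ ?_ hx
  · rintro y ⟨l, α, β, A, hA, hα, hβ, hdeg, rfl⟩
    rw [map_smul, phi_mono]
    apply zComp_smul
    have h1 : pS R G.toGraph (inG0_finite G hfin hA).toFinset ∈ zComp R G.toGraph 0 :=
      pS_mem_zComp R G.toGraph _
    have h2 := zc_list_right R G.toGraph (⇑(phi R G hfin) ∘ tgen R G)
      (fun q y m hy => by
        show y * phi R G hfin (tgen R G q) ∈ zComp R G.toGraph (m - 1)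
        rw [phi_tgen]
        exact zc_mul_tS R G hfin q m hy)
      β.reverse _ 0 h1
    have h3 := zc_list_left R G.toGraph (⇑(phi R G hfin) ∘ sgen R G)
      (fun q y m hy => by
        show phi R G hfin (sgen R G q) * y ∈ zComp R G.toGraph (m + 1)
        rw [phi_sgen]
        exact sS_mul_zc R G hfin q m hy)
      α _ _ h2
    rw [← mul_assoc] at h3
    have hint : (0 : ℤ) - (β.reverse.length : ℤ) + α.length = m := by
      simp only [List.length_reverse]
      omega
    rwa [hint] at h3
  · show phi R G hfin 0 ∈ zComp R G.toGraph m
    rw [map_zero]; exact zero_mem _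
  · intro a b _ _ ha hb
    show phi R G hfin (a + b) ∈ zComp R G.toGraph m
    rw [map_add]; exact add_mem ha hb
  · intro a _ ha
    show phi R G hfin (-a) ∈ zComp R G.toGraph m
    rw [map_neg]; exact neg_mem ha

lemma psi_zc (m : ℤ) {y : LPABig R G.toGraph} (hy : y ∈ zComp R G.toGraph m) :
    psi R G hfin y ∈ zComp R G m := by
  refine AddSubgroup.closure_induction
    (p := fun z _ => psi R G hfin z ∈ zComp R G m) ?_ ?_ ?_ ?_ hy
  · rintro z ⟨l, α, β, A, hA, hα, hβ, hdeg, rfl⟩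
    rw [map_smul, psi_mono]
    apply zComp_smul
    have h1 : pS R G (inG0_finite G.toGraph (hfinH G) hA).toFinset ∈ zComp R G 0 :=
      pS_mem_zComp R G _
    have h2 := zc_list_right R G (⇑(psi R G hfin) ∘ tgen R G.toGraph)
      (fun q y m hy => by
        show y * psi R G hfin (tgen R G.toGraph q) ∈ zComp R G (m - 1)
        rw [psi_tgen, ← mul_assoc]
        exact zComp_mul_tgen R G _ m
          (zComp_mul_pgen R G {q.1.2} (InG0.vertex q.1.2) m hy))
      β.reverse _ 0 h1
    have h3 := zc_list_left R G (⇑(psi R G hfin) ∘ sgen R G.toGraph)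
      (fun q y m hy => by
        show psi R G hfin (sgen R G.toGraph q) * y ∈ zComp R G (m + 1)
        rw [psi_sgen, mul_assoc]
        exact zComp_sgen_mul R G _ m
          (zComp_pgen_mul R G {q.1.2} (InG0.vertex q.1.2) m hy))
      α _ _ h2
    rw [← mul_assoc] at h3
    have hint : (0 : ℤ) - (β.reverse.length : ℤ) + α.length = m := by
      simp only [List.length_reverse]
      omega
    rwa [hint] at h3
  · show psi R G hfin 0 ∈ zComp R G m
    rw [map_zero]; exact zero_mem _
  · intro a b _ _ ha hb
    show psi R G hfin (a + b) ∈ zComp R G m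
    rw [map_add]; exact add_mem ha hb
  · intro a _ ha
    show psi R G hfin (-a) ∈ zComp R G m
    rw [map_neg]; exact neg_mem ha

end Ultragraph

set_option synthInstance.maxHeartbeats 1000000 in
set_option maxHeartbeats 1000000 in
open Ultragraph in
/-- for a finite-range ultragraph there is a graded `R`-algebra
isomorphism `L_R(𝒢) ≅ L_R(E_𝒢)` sending `p_A ↦ Σ_{v∈A} p_v`, `s_e ↦ Σ_{u∈r(e)} s_{e_u}`
and `s_e^* ↦ Σ_{u∈r(e)} s_{e_u}^*`. -/
theorem graded_iso_toGraph {V E : Type} [Countable V] [Countable E]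
    (G : Ultragraph V E) (hfin : ∀ e : E, (G.rng e).Finite)
    (R : Type) [CommRing R] :
    ∃ π : LPA R G →ₙₐ[R] LPA R G.toGraph,
      Function.Bijective π ∧
      (∀ (A : Set V) (hA : G.InG0 A) (hAf : A.Finite),
        π (pEl R G A hA) =
          ∑ v ∈ hAf.toFinset, pEl R G.toGraph {v} (InG0.vertex v)) ∧
      (∀ e : E, π (sEl R G e) =
        ∑ u ∈ (hfin e).toFinset.attach,
          sEl R G.toGraph ⟨(e, u.1), (Set.Finite.mem_toFinset _).mp u.2⟩) ∧
      (∀ e : E, π (tEl R G e) =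
        ∑ u ∈ (hfin e).toFinset.attach,
          tEl R G.toGraph ⟨(e, u.1), (Set.Finite.mem_toFinset _).mp u.2⟩) ∧
      (∀ (m : ℤ) (x : LPA R G), (x : LPABig R G) ∈ zComp R G m →
        (π x : LPABig R G.toGraph) ∈ zComp R G.toGraph m) ∧
      (∀ (m : ℤ) (y : LPA R G.toGraph), (y : LPABig R G.toGraph) ∈ zComp R G.toGraph m →
        ∃ x : LPA R G, (x : LPABig R G) ∈ zComp R G m ∧ π x = y) := by
  classical
  refine ⟨piRes R G hfin, ⟨?_, ?_⟩, ?_, ?_, ?_, ?_, ?_⟩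
  · intro a b h
    have h2 : phi R G hfin (a : LPABig R G) = phi R G hfin (b : LPABig R G) :=
      congrArg Subtype.val h
    have h3 := congrArg (psi R G hfin) h2
    rw [psi_phi, psi_phi] at h3
    exact Subtype.ext h3
  · intro y
    refine ⟨⟨psi R G hfin (y : LPABig R G.toGraph), psi_mem R G hfin y.2⟩, ?_⟩
    apply Subtype.ext
    show phi R G hfin (psi R G hfin (y : LPABig R G.toGraph)) = (y : LPABig R G.toGraph)
    exact phi_psi R G hfin _
  · intro A hA hAf
    apply Subtype.ext
    show phi R G hfin (pgen R G A hA) =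
      ((∑ v ∈ hAf.toFinset, pEl R G.toGraph {v} (InG0.vertex v) : LPA R G.toGraph) :
        LPABig R G.toGraph)
    rw [phi_pgen, pS, AddSubmonoidClass.coe_finset_sum]
    rfl
  · intro e
    apply Subtype.ext
    show phi R G hfin (sgen R G e) = _
    rw [phi_sgen, sS, AddSubmonoidClass.coe_finset_sum]
    rfl
  · intro e
    apply Subtype.ext
    show phi R G hfin (tgen R G e) = _
    rw [phi_tgen, tS, AddSubmonoidClass.coe_finset_sum]
    rfl
  · intro m x hx
    exact phi_zc R G hfin m hx
  · intro m y hy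
    exact ⟨⟨psi R G hfin (y : LPABig R G.toGraph), psi_mem R G hfin y.2⟩,
      psi_zc R G hfin m hy, Subtype.ext (phi_psi R G hfin _)⟩
end
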